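/- arXiv:1905.04108 — 12 statements merged into one kernel-verified Lean document; each statement's English description precedes it below -/
import Mathlib

section
/- Let G be a graph on n vertices, k a positive integer, and suppose the vertex set admits a partition into independent sets V_1,...,V_ℓ such that ℓ − Σ_{i=1}^{ℓ} ((k−1)/k)^{|V_i|} < 1. Then for any strategy family with k colors there exists a coloring for which every player guesses wrong; i.e., μ(G) ≤ k−1. -/
open Finset

lemma hat_key {V : Type*} [Fintype V] [DecidableEq V] (G : SimpleGraph V) (m : ℕ)
    (F : V → (V → Fin (m+1)) → Fin (m+1))
    (hF : ∀ v : V, ∀ x y : V → Fin (m+1), (∀ u : V, G.Adj v u → x u = y u) → F v x = F v y)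
    (S : Finset V) (hS : ∀ u ∈ S, ∀ w ∈ S, ¬ G.Adj u w) :
    m ^ S.card * (m+1) ^ (Fintype.card V - S.card) ≤
      (Finset.univ.filter (fun x : V → Fin (m+1) => ∀ v ∈ S, F v x ≠ x v)).card := by
  classical
  set base : ({v : V // v ∉ S} → Fin (m+1)) → (V → Fin (m+1)) :=
    fun g v => if h : v ∈ S then 0 else g ⟨v, h⟩ with hbase
  set Φ : ((↥S → Fin m) × ({v : V // v ∉ S} → Fin (m+1))) → (V → Fin (m+1)) :=
    fun p v => if h : v ∈ S then (F v (base p.2)).succAbove (p.1 ⟨v, h⟩) else p.2 ⟨v, h⟩ with hΦ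
  have hagree : ∀ p v, v ∈ S → F v (Φ p) = F v (base p.2) := by
    intro p v hv
    apply hF
    intro u hu
    have hus : u ∉ S := fun h => hS v hv u h hu
    simp [hΦ, hbase, hus]
  have hcard : Fintype.card ((↥S → Fin m) × ({v : V // v ∉ S} → Fin (m+1)))
      = m ^ S.card * (m+1) ^ (Fintype.card V - S.card) := by
    simp [Fintype.card_fun, Fintype.card_coe, Fintype.card_subtype_compl]
  calc m ^ S.card * (m+1) ^ (Fintype.card V - S.card)
      = (Finset.univ : Finset ((↥S → Fin m) × ({v : V // v ∉ S} → Fin (m+1)))).card := by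
        rw [Finset.card_univ, hcard]
    _ ≤ _ := by
        apply Finset.card_le_card_of_injOn Φ
        · intro p _
          simp only [Finset.mem_coe, Finset.mem_filter, Finset.mem_univ, true_and]
          intro v hv
          rw [hagree p v hv]
          have : Φ p v = (F v (base p.2)).succAbove (p.1 ⟨v, hv⟩) := by simp [hΦ, hv]
          rw [this]
          exact (Fin.succAbove_ne _ _).symm
        · intro p _ q _ hpq
          have h2 : p.2 = q.2 := by
            funext u
            have := congrFun hpq u.1
            simpa [hΦ, u.2] using this
          have h1 : p.1 = q.1 := by
            funext v
            have := congrFun hpq v.1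
            simp only [hΦ, v.2, dif_pos, h2] at this
            exact Fin.succAbove_right_injective this
          exact Prod.ext h1 h2

/-- If the vertex set of `G` admits a partition into independent sets
`V_1, …, V_ℓ` with `ℓ − Σ_i ((k−1)/k)^{|V_i|} < 1`, then for any strategy family with
`k` colors there is a coloring for which every player guesses wrong (so `μ(G) ≤ k−1`). -/
theorem hat_guessing_partition_bound {V : Type*} [Fintype V] [DecidableEq V]
    (G : SimpleGraph V) (k ℓ : ℕ) (hk : 0 < k)
    (P : Fin ℓ → Finset V)
    (hdisj : ∀ i j : Fin ℓ, i ≠ j → Disjoint (P i) (P j))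
    (hcover : ∀ v : V, ∃ i : Fin ℓ, v ∈ P i)
    (hind : ∀ i : Fin ℓ, ∀ u ∈ P i, ∀ w ∈ P i, ¬ G.Adj u w)
    (hsum : (ℓ : ℝ) - ∑ i : Fin ℓ, (((k : ℝ) - 1) / k) ^ (P i).card < 1)
    (F : V → (V → Fin k) → Fin k)
    (hF : ∀ v : V, ∀ x y : V → Fin k, (∀ u : V, G.Adj v u → x u = y u) → F v x = F v y) :
    ∃ x : V → Fin k, ∀ v : V, F v x ≠ x v := by
  classical
  obtain ⟨m, rfl⟩ : ∃ m, k = m + 1 := ⟨k - 1, (Nat.succ_pred_eq_of_pos hk).symm⟩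
  by_contra hcon
  push_neg at hcon
  set N := Fintype.card V with hN
  set gd : Fin ℓ → Finset (V → Fin (m+1)) :=
    fun i => Finset.univ.filter (fun x => ∀ v ∈ P i, F v x ≠ x v) with hgd
  set B : Fin ℓ → Finset (V → Fin (m+1)) :=
    fun i => Finset.univ.filter (fun x => ¬ ∀ v ∈ P i, F v x ≠ x v) with hB
  have htotal : (Finset.univ : Finset (V → Fin (m+1))).card = (m+1) ^ N := by
    simp [hN, Fintype.card_fun]
  have hsplit : ∀ i, (gd i).card + (B i).card = (m+1) ^ N := by
    intro i
    rw [← htotal]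
    exact Finset.card_filter_add_card_filter_not _
  have hkey : ∀ i, m ^ (P i).card * (m+1) ^ (N - (P i).card) ≤ (gd i).card :=
    fun i => hat_key G m F hF (P i) (hind i)
  -- every coloring is in some B i
  have hsub : (Finset.univ : Finset (V → Fin (m+1))) ⊆ Finset.univ.biUnion B := by
    intro x _
    obtain ⟨v, hv⟩ := hcon x
    obtain ⟨i, hi⟩ := hcover v
    refine Finset.mem_biUnion.mpr ⟨i, Finset.mem_univ i, ?_⟩
    simp only [hB, Finset.mem_filter, Finset.mem_univ, true_and]
    push_neg
    exact ⟨v, hi, hv⟩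
  have hUB : (m+1) ^ N ≤ ∑ i, (B i).card := by
    rw [← htotal]
    exact (Finset.card_le_card hsub).trans (Finset.card_biUnion_le)
  -- now real arithmetic
  have hPle : ∀ i, (P i).card ≤ N := fun i => Finset.card_le_card (Finset.subset_univ _)
  have hterm : ∀ i, ((B i).card : ℝ) ≤ ((m:ℝ)+1)^N - ((m:ℝ)/(m+1))^(P i).card * ((m:ℝ)+1)^N := by
    intro i
    have h1 : ((m:ℝ)/(m+1))^(P i).card * ((m:ℝ)+1)^N
        = (m:ℝ)^(P i).card * ((m:ℝ)+1)^(N - (P i).card) := by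
      have hpos : ((m:ℝ)+1) ≠ 0 := by positivity
      rw [pow_sub₀ _ hpos (hPle i), div_pow]
      field_simp
    rw [h1]
    have h2 : ((m:ℝ)^(P i).card * ((m:ℝ)+1)^(N - (P i).card)) ≤ ((gd i).card : ℝ) := by
      have := hkey i
      push_cast at this ⊢
      exact_mod_cast this
    have h3 : ((gd i).card : ℝ) + ((B i).card : ℝ) = ((m:ℝ)+1)^N := by
      exact_mod_cast hsplit i
    linarith
  have hsum2 : ((m+1:ℝ))^N ≤ ∑ i, ((B i).card : ℝ) := by
    have := hUB
    push_cast at this ⊢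
    calc ((m:ℝ)+1)^N = (((m+1)^N : ℕ) : ℝ) := by push_cast; ring
      _ ≤ _ := by exact_mod_cast this
  have hsum3 : ∑ i, ((B i).card : ℝ) ≤ (ℓ:ℝ) * ((m:ℝ)+1)^N - (∑ i, ((m:ℝ)/(m+1))^(P i).card) * ((m:ℝ)+1)^N := by
    rw [Finset.sum_mul]
    calc ∑ i, ((B i).card : ℝ) ≤ ∑ i : Fin ℓ, (((m:ℝ)+1)^N - ((m:ℝ)/(m+1))^(P i).card * ((m:ℝ)+1)^N) :=
          Finset.sum_le_sum (fun i _ => hterm i)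
      _ = _ := by rw [Finset.sum_sub_distrib]; simp [Finset.sum_const, mul_comm]
  -- hsum in terms of m
  have hsum' : (ℓ : ℝ) - ∑ i : Fin ℓ, ((m:ℝ)/(m+1)) ^ (P i).card < 1 := by
    have : (((m+1:ℕ) : ℝ) - 1) / ((m+1:ℕ):ℝ) = (m:ℝ)/((m:ℝ)+1) := by push_cast; ring_nf
    rw [this] at hsum
    exact hsum
  have hpow : (0:ℝ) < ((m:ℝ)+1)^N := by positivity
  nlinarith [mul_lt_mul_of_pos_right hsum' hpow]
end

section
/- Let G be a graph of order n with chromatic number h, and let k be a positive integer. If k > 1 / (1 − (1 − 1/h)^{h/n}), then μ(G) ≤ k − 1. -/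
open Finset

/-- Counting lemma: if `I` is independent, the number of hat assignments on which every
player in `I` guesses wrong is at least `k ^ (n - |I|) * (k-1) ^ |I|`. -/
lemma hat_count_good {n k : ℕ} (hk : 1 ≤ k) (G : SimpleGraph (Fin n))
    (F : Fin n → (Fin n → Fin k) → Fin k)
    (hF : ∀ v x y, (∀ u, G.Adj v u → x u = y u) → F v x = F v y)
    (I : Finset (Fin n)) (hI : ∀ v ∈ I, ∀ u ∈ I, ¬ G.Adj v u) :
    k ^ (n - I.card) * (k - 1) ^ I.card ≤
      Fintype.card {x : Fin n → Fin k // ∀ v ∈ I, F v x ≠ x v} := by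
  classical
  have e : k - 1 + 1 = k := Nat.succ_pred_eq_of_pos hk
  let avoid : Fin k → Fin (k - 1) → Fin k :=
    fun c j => Fin.cast e ((Fin.cast e.symm c).succAbove j)
  have avoid_ne : ∀ c j, avoid c j ≠ c := by
    intro c j hcon
    apply Fin.succAbove_ne (Fin.cast e.symm c) j
    apply Fin.val_injective
    simpa [avoid, Fin.val_eq_val] using congrArg Fin.val hcon
  have avoid_inj : ∀ c, Function.Injective (avoid c) := by
    intro c j j' hjj
    apply Fin.succAbove_right_injective (p := Fin.cast e.symm c)
    apply Fin.val_injective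
    simpa [avoid] using congrArg Fin.val hjj
  let z0 : Fin k := ⟨0, hk⟩
  let base : (({v : Fin n // v ∉ I}) → Fin k) → (Fin n → Fin k) := fun y v =>
    if h : v ∈ I then z0 else y ⟨v, h⟩
  let f : (({v : Fin n // v ∉ I}) → Fin k) × (({v : Fin n // v ∈ I}) → Fin (k - 1)) →
      Fin n → Fin k :=
    fun p v => if h : v ∈ I then avoid (F v (base p.1)) (p.2 ⟨v, h⟩) else p.1 ⟨v, h⟩
  have hfF : ∀ p v, v ∈ I → F v (f p) = F v (base p.1) := by
    intro p v hv
    apply hF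
    intro u hadj
    have hu : u ∉ I := fun hu => hI v hv u hu hadj
    simp [f, base, hu]
  have hmem : ∀ p, ∀ v ∈ I, F v (f p) ≠ f p v := by
    intro p v hv
    have hv' : f p v = avoid (F v (base p.1)) (p.2 ⟨v, hv⟩) := by simp [f, hv]
    rw [hfF p v hv, hv']
    exact Ne.symm (avoid_ne _ _)
  have hinj : Function.Injective f := by
    intro p q hpq
    have hy : p.1 = q.1 := by
      funext v
      have := congrFun hpq v.1
      simpa [f, v.2] using this
    have hz : p.2 = q.2 := by
      funext v
      have hfv := congrFun hpq v.1
      apply avoid_inj (F v.1 (base p.1))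
      have h1 : f p v.1 = avoid (F v.1 (base p.1)) (p.2 v) := by simp [f, v.2]
      have h2 : f q v.1 = avoid (F v.1 (base p.1)) (q.2 v) := by simp [f, v.2, hy]
      rw [h1, h2] at hfv
      exact hfv
    exact Prod.ext hy hz
  have hcard := Fintype.card_le_of_injective
    (fun p => (⟨f p, hmem p⟩ : {x : Fin n → Fin k // ∀ v ∈ I, F v x ≠ x v}))
    (fun p q hpq => hinj (congrArg Subtype.val hpq))
  calc k ^ (n - I.card) * (k - 1) ^ I.card
      = Fintype.card ((({v : Fin n // v ∉ I}) → Fin k) ×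
          (({v : Fin n // v ∈ I}) → Fin (k - 1))) := by
        simp [Fintype.card_subtype_compl, Fintype.card_fun]
    _ ≤ _ := hcard

/-- Core impossibility: with `m` colors, if `(1-1/h)^(h/n) < 1 - 1/m` then no winning
strategy exists on a graph with an `h`-coloring. -/
lemma hat_no_strategy {n h m : ℕ} (hn : 0 < n) (G : SimpleGraph (Fin n))
    (C : G.Coloring (Fin h)) (hm2 : 2 ≤ m)
    (hlt : ((1 : ℝ) - 1 / h) ^ ((h : ℝ) / (n : ℝ)) < 1 - 1 / m)
    (F : Fin n → (Fin n → Fin m) → Fin m)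
    (hF : ∀ v x y, (∀ u, G.Adj v u → x u = y u) → F v x = F v y)
    (hwin : ∀ x, ∃ v, F v x = x v) : False := by
  classical
  have hhpos : 0 < h := by
    have : Nonempty (Fin h) := ⟨C ⟨0, hn⟩⟩
    exact Fin.pos_iff_nonempty.mpr this
  have hm1 : 1 ≤ m := le_trans (by norm_num) hm2
  -- color classes
  set I : Fin h → Finset (Fin n) := fun i => univ.filter (fun v => C v = i) with hI
  set s : Fin h → ℕ := fun i => (I i).card with hs
  have hsum : ∑ i, s i = n := by
    rw [hs]
    simpa using (Finset.card_eq_sum_card_fiberwise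
      (f := C) (s := univ) (t := univ) (fun x _ => mem_univ _)).symm
  have hsle : ∀ i, s i ≤ n := by
    intro i
    simpa using Finset.card_le_card (Finset.filter_subset _ (univ : Finset (Fin n)))
  have hindep : ∀ i, ∀ v ∈ I i, ∀ u ∈ I i, ¬ G.Adj v u := by
    intro i v hv u hu hadj
    have := C.valid hadj
    simp [hI] at hv hu
    exact this (hv.trans hu.symm)
  -- Finset counting
  set B : Fin h → Finset (Fin n → Fin m) :=
    fun i => univ.filter (fun x => ¬ ∀ v ∈ I i, F v x ≠ x v) with hB
  set Gd : Fin h → Finset (Fin n → Fin m) :=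
    fun i => univ.filter (fun x => ∀ v ∈ I i, F v x ≠ x v) with hGd
  have hGdcard : ∀ i, m ^ (n - s i) * (m - 1) ^ s i ≤ (Gd i).card := by
    intro i
    have := hat_count_good hm1 G F hF (I i) (hindep i)
    rwa [Fintype.card_subtype] at this
  have hcover : (univ : Finset (Fin n → Fin m)) ⊆ univ.biUnion B := by
    intro x _
    obtain ⟨v, hv⟩ := hwin x
    refine Finset.mem_biUnion.mpr ⟨C v, mem_univ _, ?_⟩
    simp only [hB, mem_filter, mem_univ, true_and]
    intro hall
    exact hall v (by simp [hI]) hv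
  have hBcard : ∀ i, (B i).card = m ^ n - (Gd i).card := by
    intro i
    have key : (Gd i).card + (B i).card = m ^ n := by
      have h0 := Finset.card_filter_add_card_filter_not
        (s := (univ : Finset (Fin n → Fin m))) (p := fun x => ∀ v ∈ I i, F v x ≠ x v)
      simpa [hGd, hB, Fintype.card_fun] using h0
    omega
  have hmain : m ^ n ≤ ∑ i, (m ^ n - m ^ (n - s i) * (m - 1) ^ s i) := by
    calc m ^ n = (univ : Finset (Fin n → Fin m)).card := by simp [Fintype.card_fun]
      _ ≤ (univ.biUnion B).card := Finset.card_le_card hcover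
      _ ≤ ∑ i, (B i).card := Finset.card_biUnion_le
      _ ≤ ∑ i, (m ^ n - m ^ (n - s i) * (m - 1) ^ s i) := by
          apply Finset.sum_le_sum
          intro i _
          rw [hBcard i]
          exact Nat.sub_le_sub_left (hGdcard i) _
  -- pass to ℝ
  have hmR : (2 : ℝ) ≤ (m : ℝ) := by exact_mod_cast hm2
  have hm0 : (0 : ℝ) < (m : ℝ) := by linarith
  set c : ℝ := ((m : ℝ) - 1) / m with hc
  have hc0 : 0 < c := by
    apply div_pos <;> linarith
  have hc1 : c < 1 := by
    rw [hc, div_lt_one hm0]; linarith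
  have hgcast : ∀ i, ((m ^ (n - s i) * (m - 1) ^ s i : ℕ) : ℝ) = (m : ℝ) ^ n * c ^ s i := by
    intro i
    have hcast : ((m - 1 : ℕ) : ℝ) = (m : ℝ) - 1 := by
      rw [Nat.cast_sub hm1]; norm_num
    push_cast [hcast]
    have hsi := hsle i
    have hpn : (m : ℝ) ^ n = (m : ℝ) ^ (n - s i) * (m : ℝ) ^ s i := by
      rw [← pow_add]; congr 1; omega
    have hms : ((m : ℝ)) ^ (s i) ≠ 0 := by positivity
    rw [hpn, hc, div_pow]
    field_simp
  have hgle : ∀ i, m ^ (n - s i) * (m - 1) ^ s i ≤ m ^ n := by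
    intro i
    have hsi := hsle i
    calc m ^ (n - s i) * (m - 1) ^ s i ≤ m ^ (n - s i) * m ^ s i :=
          Nat.mul_le_mul_left _ (Nat.pow_le_pow_left (by omega) _)
      _ = m ^ n := by rw [← pow_add]; congr 1; omega
  have hmainR : ((m : ℝ) ^ n) ≤ ∑ i : Fin h, ((m : ℝ) ^ n - (m : ℝ) ^ n * c ^ s i) := by
    have h1 : ((m ^ n : ℕ) : ℝ) ≤
        ∑ i : Fin h, (((m ^ n : ℕ) : ℝ) - ((m ^ (n - s i) * (m - 1) ^ s i : ℕ) : ℝ)) := by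
      calc ((m ^ n : ℕ) : ℝ)
          ≤ ((∑ i : Fin h, (m ^ n - m ^ (n - s i) * (m - 1) ^ s i) : ℕ) : ℝ) := by
            exact_mod_cast hmain
        _ = _ := by
            rw [Nat.cast_sum]
            exact Finset.sum_congr rfl fun i _ => Nat.cast_sub (hgle i)
    calc ((m : ℝ) ^ n) = ((m ^ n : ℕ) : ℝ) := by push_cast; ring
      _ ≤ _ := h1
      _ = ∑ i : Fin h, ((m : ℝ) ^ n - (m : ℝ) ^ n * c ^ s i) := by
          refine Finset.sum_congr rfl fun i _ => ?_
          rw [hgcast i]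
          push_cast
          ring
  -- derive Σ c ^ s i ≤ h - 1
  have hsumc : ∑ i : Fin h, c ^ s i ≤ (h : ℝ) - 1 := by
    have hMn : (0 : ℝ) < (m : ℝ) ^ n := by positivity
    rw [Finset.sum_sub_distrib] at hmainR
    simp only [Finset.sum_const, card_univ, Fintype.card_fin, nsmul_eq_mul] at hmainR
    rw [← Finset.mul_sum] at hmainR
    nlinarith [hmainR]
  -- AM-GM lower bound
  have hAMGM : (h : ℝ) * c ^ ((n : ℝ) / h) ≤ ∑ i : Fin h, c ^ s i := by
    have hw : ∀ i ∈ (univ : Finset (Fin h)), (0 : ℝ) ≤ 1 / h := fun i _ => by positivity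
    have hw' : ∑ _i : Fin h, (1 : ℝ) / h = 1 := by
      simp
      field_simp
    have hz : ∀ i ∈ (univ : Finset (Fin h)), (0 : ℝ) ≤ c ^ s i := fun i _ => by positivity
    have := Real.geom_mean_le_arith_mean_weighted univ (fun _ => 1 / h) (fun i => c ^ s i)
      hw hw' hz
    have hprod : ∏ i : Fin h, (c ^ s i) ^ ((1 : ℝ) / h) = c ^ ((n : ℝ) / h) := by
      have : ∀ i : Fin h, (c ^ s i) ^ ((1 : ℝ) / h) = c ^ ((s i : ℝ) * (1 / h)) := by
        intro i
        rw [← Real.rpow_natCast c (s i), ← Real.rpow_mul (le_of_lt hc0)]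
      rw [Finset.prod_congr rfl (fun i _ => this i),
        ← Real.rpow_sum_of_pos hc0]
      congr 1
      rw [← Finset.sum_mul]
      rw [show ∑ i : Fin h, ((s i : ℝ)) = (n : ℝ) by exact_mod_cast congrArg Nat.cast hsum]
      ring
    rw [hprod] at this
    have : c ^ ((n : ℝ) / h) ≤ (1 / h) * ∑ i : Fin h, c ^ s i := by
      rw [Finset.mul_sum]
      exact this
    have hh0 : (0 : ℝ) < (h : ℝ) := by exact_mod_cast hhpos
    calc (h : ℝ) * c ^ ((n : ℝ) / h) ≤ (h : ℝ) * ((1 / h) * ∑ i : Fin h, c ^ s i) := by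
          exact mul_le_mul_of_nonneg_left this (le_of_lt hh0)
      _ = ∑ i : Fin h, c ^ s i := by field_simp
  -- combine: c ^ (n/h) ≤ 1 - 1/h
  have hh0 : (0 : ℝ) < (h : ℝ) := by exact_mod_cast hhpos
  have hn0 : (0 : ℝ) < (n : ℝ) := by exact_mod_cast hn
  have hup : c ^ ((n : ℝ) / h) ≤ 1 - 1 / h := by
    have h2 := le_trans hAMGM hsumc
    have he : (1 : ℝ) - 1 / (h : ℝ) = ((h : ℝ) - 1) / h := by field_simp
    rw [he, le_div_iff₀ hh0]
    linarith
  -- and from hlt: 1 - 1/h < c ^ (n/h)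
  have hb0 : (0 : ℝ) ≤ 1 - 1 / h := by
    have : 1 / (h : ℝ) ≤ 1 := by
      rw [div_le_one hh0]; exact_mod_cast hhpos
    linarith
  have hcm : 1 - 1 / (m : ℝ) = c := by
    rw [hc]; field_simp
  have hlow : 1 - 1 / (h : ℝ) < c ^ ((n : ℝ) / h) := by
    have hstep := Real.rpow_lt_rpow (Real.rpow_nonneg hb0 _) (hcm ▸ hlt)
      (by positivity : (0 : ℝ) < (n : ℝ) / h)
    rw [← Real.rpow_mul hb0] at hstep
    rw [show (h : ℝ) / n * ((n : ℝ) / h) = 1 by field_simp] at hstep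
    simpa using hstep
  linarith


/-- The hat guessing number of a graph: the largest number of colors `k` for which the
players (one per vertex, each seeing only the colors at adjacent vertices) have a
strategy guaranteeing at least one correct guess on every coloring. -/
noncomputable def hatGuessingNumber {V : Type*} [Fintype V] (G : SimpleGraph V) : ℕ :=
  sSup {k : ℕ | ∃ F : V → (V → Fin k) → Fin k,
    (∀ v : V, ∀ x y : V → Fin k, (∀ u : V, G.Adj v u → x u = y u) → F v x = F v y) ∧
    (∀ x : V → Fin k, ∃ v : V, F v x = x v)}

/-- Let `G` be a graph of order `n` with chromatic number `h` and let `k`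
be a positive integer.  If `k > 1 / (1 − (1 − 1/h)^{h/n})`, then `μ(G) ≤ k − 1`. -/
theorem hat_guessing_chromatic_bound (n : ℕ) (hn : 0 < n) (G : SimpleGraph (Fin n))
    (h k : ℕ) (hh : G.chromaticNumber = (h : ℕ∞)) (hkpos : 0 < k)
    (hk : (k : ℝ) > 1 / (1 - ((1 : ℝ) - 1 / (h : ℝ)) ^ ((h : ℝ) / (n : ℝ)))) :
    hatGuessingNumber G ≤ k - 1 := by
  classical
  haveI : Nonempty (Fin n) := Fin.pos_iff_nonempty.mp hn
  have hcol : G.Colorable h := SimpleGraph.chromaticNumber_le_iff_colorable.mp (le_of_eq hh)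
  have hhpos : 0 < h := by
    have hpos := G.chromaticNumber_pos (hcol)
    rw [hh] at hpos
    exact_mod_cast hpos
  obtain ⟨C⟩ := hcol
  have hh0 : (0 : ℝ) < (h : ℝ) := by exact_mod_cast hhpos
  have hn0 : (0 : ℝ) < (n : ℝ) := by exact_mod_cast hn
  have hb0 : (0 : ℝ) ≤ 1 - 1 / h := by
    have : 1 / (h : ℝ) ≤ 1 := by rw [div_le_one hh0]; exact_mod_cast hhpos
    linarith
  have hb1 : (1 : ℝ) - 1 / h < 1 := by
    have : 0 < 1 / (h : ℝ) := by positivity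
    linarith
  set r : ℝ := ((1 : ℝ) - 1 / h) ^ ((h : ℝ) / (n : ℝ)) with hr
  have hr0 : 0 ≤ r := Real.rpow_nonneg hb0 _
  have hr1 : r < 1 := Real.rpow_lt_one hb0 hb1 (by positivity)
  have hD0 : 0 < 1 - r := by linarith
  have hk1 : (1 : ℝ) < (k : ℝ) := by
    have : (1 : ℝ) ≤ 1 / (1 - r) := by
      rw [le_div_iff₀ hD0]; linarith
    linarith [hk]
  have hk2 : 2 ≤ k := by
    have : (1 : ℕ) < k := by exact_mod_cast hk1
    omega
  apply csSup_le
  · exact ⟨0, fun v x => (x v).elim0, fun v x y _ => (x v).elim0, fun x => (x ⟨0, hn⟩).elim0⟩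
  · intro m hm
    by_contra hcon
    push_neg at hcon
    have hkm : k ≤ m := by omega
    obtain ⟨F, hF, hwin⟩ := hm
    have hm2 : 2 ≤ m := le_trans hk2 hkm
    have hmR : (k : ℝ) ≤ m := by exact_mod_cast hkm
    have hkR : (0 : ℝ) < k := by linarith
    have hmR0 : (0 : ℝ) < m := by linarith
    have hlt : r < 1 - 1 / m := by
      have h1 : 1 / (k : ℝ) < 1 - r := by
        rw [div_lt_iff₀ hkR]
        have := (div_lt_iff₀ hD0).mp hk
        linarith
      have h2 : 1 / (m : ℝ) ≤ 1 / k := one_div_le_one_div_of_le hkR hmR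
      linarith
    exact hat_no_strategy hn G C hm2 hlt F hF hwin
end

section
/- If G is a graph on n vertices that is not a complete graph, then its hat guessing number satisfies μ(G) < n. In particular every graph of order n satisfies μ(G) ≤ n. -/
section aux

variable {n k : ℕ} {G : SimpleGraph (Fin n)}
  {F : Fin n → (Fin n → Fin k) → Fin k}

private lemma F_upd
    (hF : ∀ v : Fin n, ∀ x y : Fin n → Fin k, (∀ u, G.Adj v u → x u = y u) → F v x = F v y)
    {v a : Fin n} (hna : ¬ G.Adj v a) (x : Fin n → Fin k) (c : Fin k) :
    F v (Function.update x a c) = F v x := by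
  apply hF
  intro u hu
  rcases eq_or_ne u a with rfl | h
  · exact absurd hu hna
  · simp [Function.update_of_ne h]

private lemma card_single
    (hF : ∀ v : Fin n, ∀ x y : Fin n → Fin k, (∀ u, G.Adj v u → x u = y u) → F v x = F v y)
    (v : Fin n) :
    (Finset.univ.filter (fun x : Fin n → Fin k => F v x = x v)).card * k = k ^ n := by
  have hvv : ¬ G.Adj v v := G.loopless.irrefl v
  have e : (Fin n → Fin k) ≃ {x : Fin n → Fin k // F v x = x v} × Fin k :=
  { toFun := fun x => (⟨Function.update x v (F v x), by
      rw [F_upd hF hvv]; simp⟩, x v)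
    invFun := fun p => Function.update p.1.1 v p.2
    left_inv := fun x => by simp [F_upd hF hvv]
    right_inv := fun ⟨⟨a, ha⟩, c⟩ => by
      have h1 : F v (Function.update a v c) = a v := by rw [F_upd hF hvv, ha]
      simp [h1] }
  calc (Finset.univ.filter (fun x : Fin n → Fin k => F v x = x v)).card * k
      = Fintype.card {x : Fin n → Fin k // F v x = x v} * Fintype.card (Fin k) := by
        rw [Fintype.card_subtype, Fintype.card_fin]
    _ = Fintype.card ({x : Fin n → Fin k // F v x = x v} × Fin k) := (Fintype.card_prod _ _).symm
    _ = Fintype.card (Fin n → Fin k) := (Fintype.card_congr e).symm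
    _ = k ^ n := by simp [Fintype.card_fun]

private lemma card_pair
    (hF : ∀ v : Fin n, ∀ x y : Fin n → Fin k, (∀ u, G.Adj v u → x u = y u) → F v x = F v y)
    {u w : Fin n} (huw : u ≠ w) (hna : ¬ G.Adj u w) :
    (Finset.univ.filter (fun x : Fin n → Fin k => F u x = x u ∧ F w x = x w)).card * (k * k)
      = k ^ n := by
  have huu : ¬ G.Adj u u := G.loopless.irrefl u
  have hww : ¬ G.Adj w w := G.loopless.irrefl w
  have hna' : ¬ G.Adj w u := fun h => hna h.symm
  have e : (Fin n → Fin k) ≃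
      {x : Fin n → Fin k // F u x = x u ∧ F w x = x w} × (Fin k × Fin k) :=
  { toFun := fun x => (⟨Function.update (Function.update x u (F u x)) w (F w x), by
      constructor
      · rw [F_upd hF hna, F_upd hF huu, Function.update_of_ne huw, Function.update_self]
      · rw [F_upd hF hww, F_upd hF hna', Function.update_self]⟩, (x u, x w))
    invFun := fun p => Function.update (Function.update p.1.1 u p.2.1) w p.2.2
    left_inv := fun x => by
      funext z
      dsimp only
      by_cases hzw : z = w
      · subst hzw; simp
      · by_cases hzu : z = u
        · subst hzu
          rw [Function.update_of_ne huw, Function.update_self]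
        · rw [Function.update_of_ne hzw, Function.update_of_ne hzu,
            Function.update_of_ne hzw, Function.update_of_ne hzu]
    right_inv := fun ⟨⟨a, ha1, ha2⟩, c, d⟩ => by
      have hu1 : F u (Function.update (Function.update a u c) w d) = a u := by
        rw [F_upd hF hna, F_upd hF huu, ha1]
      have hw1 : F w (Function.update (Function.update a u c) w d) = a w := by
        rw [F_upd hF hww, F_upd hF hna', ha2]
      dsimp only
      refine Prod.ext (Subtype.ext ?_) (Prod.ext ?_ ?_)
      · show Function.update (Function.update (Function.update (Function.update a u c) w d) u
            (F u (Function.update (Function.update a u c) w d))) w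
            (F w (Function.update (Function.update a u c) w d)) = a
        rw [hu1, hw1]
        funext z
        by_cases hzw : z = w
        · subst hzw
          rw [Function.update_self]
        · by_cases hzu : z = u
          · subst hzu
            rw [Function.update_of_ne hzw, Function.update_self]
          · rw [Function.update_of_ne hzw, Function.update_of_ne hzu,
              Function.update_of_ne hzw, Function.update_of_ne hzu]
      · show Function.update (Function.update a u c) w d u = c
        rw [Function.update_of_ne huw, Function.update_self]
      · show Function.update (Function.update a u c) w d w = d
        rw [Function.update_self] }
  calc (Finset.univ.filter (fun x : Fin n → Fin k => F u x = x u ∧ F w x = x w)).card * (k * k)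
      = Fintype.card {x : Fin n → Fin k // F u x = x u ∧ F w x = x w}
          * Fintype.card (Fin k × Fin k) := by
        rw [Fintype.card_subtype]
        simp [mul_comm]
    _ = Fintype.card ({x : Fin n → Fin k // F u x = x u ∧ F w x = x w} × (Fin k × Fin k)) :=
        (Fintype.card_prod _ _).symm
    _ = Fintype.card (Fin n → Fin k) := (Fintype.card_congr e).symm
    _ = k ^ n := by simp [Fintype.card_fun]

private lemma cover_bound
    (hW : ∀ x : Fin n → Fin k, ∃ v : Fin n, F v x = x v) :
    k ^ n ≤ ∑ v : Fin n, (Finset.univ.filter (fun x : Fin n → Fin k => F v x = x v)).card := by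
  set A : Fin n → Finset (Fin n → Fin k) :=
    fun v => Finset.univ.filter (fun x : Fin n → Fin k => F v x = x v) with hA
  have hsub : (Finset.univ : Finset (Fin n → Fin k)) ⊆ Finset.univ.biUnion A := by
    intro x _
    obtain ⟨v, hv⟩ := hW x
    exact Finset.mem_biUnion.2 ⟨v, Finset.mem_univ v, by simp [hA, hv]⟩
  calc k ^ n = Fintype.card (Fin n → Fin k) := by simp [Fintype.card_fun]
    _ = (Finset.univ : Finset (Fin n → Fin k)).card := Finset.card_univ.symm
    _ ≤ (Finset.univ.biUnion A).card := Finset.card_le_card hsub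
    _ ≤ ∑ v : Fin n, (A v).card := Finset.card_biUnion_le

end aux

/-- If `G` is a graph on `n` vertices that is not complete, then
`μ(G) < n`.  In particular every graph of order `n` satisfies `μ(G) ≤ n`. -/
theorem hat_guessing_lt_card (n : ℕ) (G : SimpleGraph (Fin n)) :
    (G ≠ ⊤ → hatGuessingNumber G < n) ∧ hatGuessingNumber G ≤ n := by
  set S := {k : ℕ | ∃ F : Fin n → (Fin n → Fin k) → Fin k,
    (∀ v : Fin n, ∀ x y : Fin n → Fin k, (∀ u : Fin n, G.Adj v u → x u = y u) → F v x = F v y) ∧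
    (∀ x : Fin n → Fin k, ∃ v : Fin n, F v x = x v)} with hS
  -- every member of S is ≤ n
  have hle : ∀ k ∈ S, k ≤ n := by
    intro k hk
    obtain ⟨F, hF, hW⟩ := hk
    rcases Nat.eq_zero_or_pos k with rfl | hkpos
    · exact Nat.zero_le n
    have h1 : k ^ n * k ≤ (∑ v : Fin n,
        (Finset.univ.filter (fun x : Fin n → Fin k => F v x = x v)).card) * k :=
      Nat.mul_le_mul_right k (cover_bound hW)
    rw [Finset.sum_mul] at h1
    have h2 : ∀ v ∈ (Finset.univ : Finset (Fin n)),
        (Finset.univ.filter (fun x : Fin n → Fin k => F v x = x v)).card * k = k ^ n :=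
      fun v _ => card_single hF v
    rw [Finset.sum_congr rfl h2, Finset.sum_const, Finset.card_univ, Fintype.card_fin,
      smul_eq_mul] at h1
    have hp : 0 < k ^ n := Nat.pow_pos hkpos
    calc k = k ^ n * k / k ^ n := by rw [Nat.mul_div_cancel_left _ hp]
      _ ≤ n * k ^ n / k ^ n := Nat.div_le_div_right h1
      _ = n := Nat.mul_div_cancel n hp
  -- strict bound for non-complete graphs
  have hlt : G ≠ ⊤ → ∀ k ∈ S, k < n := by
    intro hne k hk
    obtain ⟨u, w, huw, hna⟩ : ∃ u w : Fin n, u ≠ w ∧ ¬ G.Adj u w := by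
      by_contra h
      push_neg at h
      exact hne (by
        ext a b
        simp only [SimpleGraph.top_adj]
        exact ⟨fun hab => hab.ne, fun hab => h a b hab⟩)
    obtain ⟨F, hF, hW⟩ := hk
    rcases Nat.eq_zero_or_pos k with rfl | hkpos
    · exact Fin.pos_iff_nonempty.2 ⟨u⟩
    by_contra hcon
    push_neg at hcon  -- hcon : n ≤ k
    set A : Fin n → Finset (Fin n → Fin k) :=
      fun v => Finset.univ.filter (fun x : Fin n → Fin k => F v x = x v) with hA
    set I : Finset (Fin n → Fin k) :=
      Finset.univ.filter (fun x : Fin n → Fin k => F u x = x u ∧ F w x = x w) with hI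
    have hIint : I = A u ∩ A w := by
      rw [hI, hA, Finset.filter_and]
    -- card identities
    have hcs : ∀ v : Fin n, (A v).card * k = k ^ n := fun v => card_single hF v
    have hcp : I.card * (k * k) = k ^ n := card_pair hF huw hna
    -- covering with inclusion–exclusion on u, w
    have hsub : (Finset.univ : Finset (Fin n → Fin k)) ⊆ Finset.univ.biUnion A := by
      intro x _
      obtain ⟨v, hv⟩ := hW x
      exact Finset.mem_biUnion.2 ⟨v, Finset.mem_univ v, by simp [hA, hv]⟩
    have hbi : Finset.univ.biUnion A ⊆
        (A u ∪ A w) ∪ (Finset.univ \ {u, w}).biUnion A := by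
      intro x hx
      obtain ⟨v, -, hv⟩ := Finset.mem_biUnion.1 hx
      rcases eq_or_ne v u with rfl | hvu
      · exact Finset.mem_union_left _ (Finset.mem_union_left _ hv)
      rcases eq_or_ne v w with rfl | hvw
      · exact Finset.mem_union_left _ (Finset.mem_union_right _ hv)
      refine Finset.mem_union_right _ (Finset.mem_biUnion.2 ⟨v, ?_, hv⟩)
      simp [hvu, hvw]
    have key : k ^ n + I.card ≤ ∑ v : Fin n, (A v).card := by
      have c1 : k ^ n ≤ (Finset.univ.biUnion A).card := by
        calc k ^ n = Fintype.card (Fin n → Fin k) := by simp [Fintype.card_fun]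
          _ = (Finset.univ : Finset (Fin n → Fin k)).card := Finset.card_univ.symm
          _ ≤ _ := Finset.card_le_card hsub
      have c2 : (Finset.univ.biUnion A).card ≤
          (A u ∪ A w).card + ∑ v ∈ Finset.univ \ {u, w}, (A v).card := by
        refine le_trans (Finset.card_le_card hbi) ?_
        exact le_trans (Finset.card_union_le _ _)
          (Nat.add_le_add_left Finset.card_biUnion_le _)
      have c3 : (A u ∪ A w).card + I.card = (A u).card + (A w).card := by
        rw [hIint]; exact Finset.card_union_add_card_inter _ _
      have c4 : (A u).card + (A w).card + ∑ v ∈ Finset.univ \ {u, w}, (A v).card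
          = ∑ v : Fin n, (A v).card := by
        have hsd : (∑ v ∈ Finset.univ \ {u, w}, (A v).card)
            + ∑ v ∈ ({u, w} : Finset (Fin n)), (A v).card = ∑ v : Fin n, (A v).card :=
          Finset.sum_sdiff (Finset.subset_univ _)
        have hpair : ∑ v ∈ ({u, w} : Finset (Fin n)), (A v).card
            = (A u).card + (A w).card := Finset.sum_pair huw
        omega
      omega
    -- multiply through by k * k
    have key2 : (k ^ n + I.card) * (k * k) ≤ (∑ v : Fin n, (A v).card) * (k * k) :=
      Nat.mul_le_mul_right _ key
    rw [Finset.sum_mul] at key2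
    have h2 : ∀ v ∈ (Finset.univ : Finset (Fin n)),
        (A v).card * (k * k) = k ^ n * k := by
      intro v _
      rw [← mul_assoc, hcs v]
    rw [Finset.sum_congr rfl h2, Finset.sum_const, Finset.card_univ, Fintype.card_fin,
      smul_eq_mul, add_mul, hcp] at key2
    -- key2 : k ^ n * (k * k) + k ^ n ≤ n * (k ^ n * k)
    have hup : n * (k ^ n * k) ≤ k ^ n * (k * k) := by
      calc n * (k ^ n * k) ≤ k * (k ^ n * k) := Nat.mul_le_mul_right _ hcon
        _ = k ^ n * (k * k) := by ring
    have hp : 0 < k ^ n := Nat.pow_pos hkpos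
    omega
  constructor
  · intro hne
    have hn : 0 < n := by
      rcases Nat.eq_zero_or_pos n with rfl | h
      · exact absurd (Subsingleton.elim G ⊤) hne
      · exact h
    have : hatGuessingNumber G ≤ n - 1 := by
      apply csSup_le'
      intro k hk
      have := hlt hne k hk
      omega
    omega
  · exact csSup_le' hle
end

section
/- If an independent set S of vertices in a graph G is fixed, a strategy family with k ≥ 2 colors is fixed, and hats are assigned independently and uniformly at random, then the probability that no vertex in S guesses correctly equals ((k−1)/k)^{|S|}. -/
/-- If `S` is an independent set of a graph `G`, a strategy family with
`k ≥ 2` colors is fixed, and hats are assigned independently and uniformly at random,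
then the probability that no vertex of `S` guesses correctly equals `((k−1)/k)^{|S|}`.
(Probability expressed as the proportion of colorings.) -/
theorem hat_guessing_independent_set_probability {V : Type*} [Fintype V]
    (G : SimpleGraph V) (k : ℕ) (hk : 2 ≤ k) (S : Finset V)
    (hind : ∀ u ∈ S, ∀ w ∈ S, ¬ G.Adj u w)
    (F : V → (V → Fin k) → Fin k)
    (hF : ∀ v : V, ∀ x y : V → Fin k, (∀ u : V, G.Adj v u → x u = y u) → F v x = F v y) :
    (Nat.card {x : V → Fin k // ∀ v ∈ S, F v x ≠ x v} : ℝ) / (k : ℝ) ^ (Fintype.card V)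
      = (((k : ℝ) - 1) / k) ^ S.card := by
  classical
  have hk0 : (k : ℝ) ≠ 0 := by
    have : (0:ℝ) < k := by exact_mod_cast Nat.lt_of_lt_of_le (by norm_num) hk
    linarith
  have hsle : S.card ≤ Fintype.card V := Finset.card_le_univ S
  -- decompose colorings
  let e : (V → Fin k) ≃ (({ v // v ∉ S } → Fin k) × ({ v // v ∈ S } → Fin k)) :=
    (Equiv.piEquivPiSubtypeProd (· ∈ S) (fun _ => Fin k)).trans (Equiv.prodComm _ _)
  have hsymm : ∀ (y : { v // v ∉ S } → Fin k) (z : { v // v ∈ S } → Fin k) (i : V),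
      e.symm (y, z) i = if h : i ∈ S then z ⟨i, h⟩ else y ⟨i, h⟩ := by
    intro y z i
    simp [e, Equiv.piEquivPiSubtypeProd_symm_apply]
  -- the guess of v ∈ S depends only on y
  have hguess : ∀ (y : { v // v ∉ S } → Fin k) (z z' : { v // v ∈ S } → Fin k)
      (v : V), v ∈ S → F v (e.symm (y, z)) = F v (e.symm (y, z')) := by
    intro y z z' v hv
    apply hF
    intro u hu
    have huS : u ∉ S := fun huS => hind v hv u huS hu
    rw [hsymm, hsymm, dif_neg huS, dif_neg huS]
  have z0 : { v // v ∈ S } → Fin k := fun _ => ⟨0, by omega⟩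
  have hcount : Nat.card {x : V → Fin k // ∀ v ∈ S, F v x ≠ x v}
      = (k - 1) ^ S.card * k ^ (Fintype.card V - S.card) := by
    rw [Nat.card_eq_fintype_card]
    have e1 : {x : V → Fin k // ∀ v ∈ S, F v x ≠ x v}
        ≃ {p : ({ v // v ∉ S } → Fin k) × ({ v // v ∈ S } → Fin k) //
            ∀ v ∈ S, F v (e.symm (p.1, p.2)) ≠ (e.symm (p.1, p.2)) v} :=
      e.subtypeEquiv (by intro x; simp)
    have e2 := Equiv.subtypeProdEquivSigmaSubtype
      (fun (y : { v // v ∉ S } → Fin k) (z : { v // v ∈ S } → Fin k) =>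
        ∀ v ∈ S, F v (e.symm (y, z)) ≠ (e.symm (y, z)) v)
    rw [Fintype.card_congr (e1.trans e2), Fintype.card_sigma]
    have key : ∀ y : ({ v // v ∉ S } → Fin k),
        Fintype.card {z : { v // v ∈ S } → Fin k //
            ∀ v ∈ S, F v (e.symm (y, z)) ≠ (e.symm (y, z)) v}
          = (k - 1) ^ S.card := by
      intro y
      have e3 : {z : { v // v ∈ S } → Fin k //
            ∀ v ∈ S, F v (e.symm (y, z)) ≠ (e.symm (y, z)) v}
          ≃ {z : { v // v ∈ S } → Fin k //
            ∀ v : { v // v ∈ S }, ¬ z v = F v.1 (e.symm (y, z0))} := by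
        apply Equiv.subtypeEquivRight
        intro z
        constructor
        · intro h v hzv
          exact h v.1 v.2 (by
            rw [hguess y z z0 v.1 v.2, hsymm, dif_pos v.2] at *
            exact hzv.symm ▸ rfl)
        · intro h v hv hzv
          refine h ⟨v, hv⟩ ?_
          rw [hsymm, dif_pos hv] at hzv
          rw [← hzv, hguess y z0 z v hv]
      rw [Fintype.card_congr (e3.trans (Equiv.subtypePiEquivPi
        (p := fun (v : { v // v ∈ S }) (b : Fin k) => ¬ b = F v.1 (e.symm (y, z0)))))]
      rw [Fintype.card_pi]
      have : ∀ v : { v // v ∈ S },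
          Fintype.card {b : Fin k // ¬ b = F v.1 (e.symm (y, z0))} = k - 1 := by
        intro v
        rw [Fintype.card_subtype_compl, Fintype.card_subtype_eq, Fintype.card_fin]
      simp only [this, Finset.prod_const, Finset.card_univ, Fintype.card_coe]
    simp only [key, Finset.sum_const, Finset.card_univ, smul_eq_mul]
    rw [Fintype.card_fun, Fintype.card_fin, Fintype.card_subtype_compl, Fintype.card_coe,
      mul_comm]
  rw [hcount]
  have h1k : 1 ≤ k := le_trans (by norm_num) hk
  have h1 : ((k - 1 : ℕ) : ℝ) = (k : ℝ) - 1 := by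
    rw [Nat.cast_sub h1k, Nat.cast_one]
  push_cast
  rw [h1, div_pow, div_eq_div_iff (by positivity) (by positivity),
    mul_assoc, ← pow_add, Nat.sub_add_cancel hsle]
end

section
/- Every graph G with maximum degree Δ satisfies μ(G) ≤ e(Δ+1), i.e., if the number of colors k satisfies e·(Δ+1)·(1/k) ≤ 1 then for every strategy family there is a coloring for which all guesses are wrong. -/
open Finset

section HatLLL
variable {V : Type*} [Fintype V] [DecidableEq V] {k : ℕ}

def hatC (F : V → (V → Fin k) → Fin k) (S : Finset V) : Finset (V → Fin k) :=
  Finset.univ.filter fun x => ∀ v ∈ S, F v x ≠ x v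

def hatA (F : V → (V → Fin k) → Fin k) (v : V) : Finset (V → Fin k) :=
  Finset.univ.filter fun x => F v x = x v

lemma mem_hatC {F : V → (V → Fin k) → Fin k} {S : Finset V} {x : V → Fin k} :
    x ∈ hatC F S ↔ ∀ v ∈ S, F v x ≠ x v := by simp [hatC]

lemma mem_hatA {F : V → (V → Fin k) → Fin k} {v : V} {x : V → Fin k} :
    x ∈ hatA F v ↔ F v x = x v := by simp [hatA]

lemma hatC_anti {F : V → (V → Fin k) → Fin k} {S T : Finset V} (h : S ⊆ T) :
    hatC F T ⊆ hatC F S := fun x hx => mem_hatC.2 fun v hv => mem_hatC.1 hx v (h hv)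

lemma hatC_insert {F : V → (V → Fin k) → Fin k} {S : Finset V} {v : V} :
    hatC F (insert v S) = hatC F S \ (hatC F S ∩ hatA F v) := by
  ext x
  simp only [mem_hatC, mem_hatA, Finset.mem_sdiff, Finset.mem_inter, Finset.mem_insert]
  constructor
  · intro h
    exact ⟨fun w hw => h w (Or.inr hw), fun hh => h v (Or.inl rfl) hh.2⟩
  · rintro ⟨h1, h2⟩ w hw
    rcases hw with rfl | hw
    · exact fun hc => h2 ⟨h1, hc⟩
    · exact h1 w hw

lemma card_hatC_insert {F : V → (V → Fin k) → Fin k} {S : Finset V} {v : V} :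
    (hatC F (insert v S)).card = (hatC F S).card - (hatC F S ∩ hatA F v).card := by
  rw [hatC_insert, Finset.card_sdiff_of_subset Finset.inter_subset_left]

lemma card_hatC_insert_real {F : V → (V → Fin k) → Fin k} {S : Finset V} {v : V} :
    ((hatC F (insert v S)).card : ℝ)
      = ((hatC F S).card : ℝ) - ((hatC F S ∩ hatA F v).card : ℝ) := by
  rw [card_hatC_insert, Nat.cast_sub (Finset.card_le_card Finset.inter_subset_left)]

lemma card_indep (G : SimpleGraph V) (F : V → (V → Fin k) → Fin k)
    (hF : ∀ v : V, ∀ x y : V → Fin k, (∀ u : V, G.Adj v u → x u = y u) → F v x = F v y)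
    {S : Finset V} {v : V} (hvS : v ∉ S) (hadj : ∀ w ∈ S, ¬ G.Adj v w) :
    (hatC F S ∩ hatA F v).card * k = (hatC F S).card := by
  have hFv : ∀ (x : V → Fin k) (c : Fin k), F v (Function.update x v c) = F v x := by
    intro x c
    refine hF v _ _ fun u hu => ?_
    rw [Function.update_of_ne (G.ne_of_adj hu).symm]
  have hCv : ∀ (x : V → Fin k) (c : Fin k), (Function.update x v c ∈ hatC F S ↔ x ∈ hatC F S) := by
    intro x c
    simp only [mem_hatC]
    have key : ∀ w ∈ S, F w (Function.update x v c) = F w x ∧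
        Function.update x v c w = x w := by
      intro w hw
      have hwv : w ≠ v := fun h => hvS (h ▸ hw)
      constructor
      · refine hF w _ _ fun u hu => ?_
        have : u ≠ v := by
          rintro rfl
          exact hadj w hw (G.adj_symm hu)
        rw [Function.update_of_ne this]
      · rw [Function.update_of_ne hwv]
    constructor
    · intro h w hw
      have := h w hw
      rwa [(key w hw).1, (key w hw).2] at this
    · intro h w hw
      rw [(key w hw).1, (key w hw).2]
      exact h w hw
  have := Finset.card_bij'
    (s := hatC F S) (t := (hatC F S ∩ hatA F v) ×ˢ (Finset.univ : Finset (Fin k)))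
    (fun x _ => (Function.update x v (F v x), x v))
    (fun p _ => Function.update p.1 v p.2)
    (fun x hx => by
      simp only [Finset.mem_product, Finset.mem_inter, Finset.mem_univ, and_true]
      refine ⟨(hCv x (F v x)).2 hx, ?_⟩
      rw [mem_hatA, hFv, Function.update_self])
    (fun p hp => by
      simp only [Finset.mem_product, Finset.mem_inter] at hp
      exact (hCv p.1 p.2).2 hp.1.1)
    (fun x hx => by
      simp only
      rw [Function.update_idem, Function.update_eq_self])
    (fun p hp => by
      simp only [Finset.mem_product, Finset.mem_inter] at hp
      have hA := mem_hatA.1 hp.1.2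
      refine Prod.ext ?_ ?_ <;> simp only
      · rw [hFv, Function.update_idem, hA, Function.update_eq_self]
      · rw [Function.update_self])
  rw [this, Finset.card_product, Finset.card_univ, Fintype.card_fin]

/-- Main LLL-style bound, by strong induction on `S`. -/
lemma hat_bound (G : SimpleGraph V) [DecidableRel G.Adj] (F : V → (V → Fin k) → Fin k)
    (hF : ∀ v : V, ∀ x y : V → Fin k, (∀ u : V, G.Adj v u → x u = y u) → F v x = F v y)
    (d : ℕ) (hdeg : ∀ v, G.degree v ≤ d)
    (hkey : ((d:ℝ)+1) ≤ (k:ℝ) * ((d:ℝ)/((d:ℝ)+1))^d)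
    (S : Finset V) :
    ∀ v ∉ S, ((hatC F S ∩ hatA F v).card : ℝ) * ((k:ℝ) * ((d:ℝ)/((d:ℝ)+1))^d)
      ≤ ((hatC F S).card : ℝ) := by
  induction S using Finset.strongInductionOn with
  | _ S IH =>
  intro v hv
  set r : ℝ := (d:ℝ)/((d:ℝ)+1) with hr_def
  have hd1 : (0:ℝ) < (d:ℝ)+1 := by positivity
  have hr0 : 0 ≤ r := by positivity
  have hr1 : r ≤ 1 := by
    rw [hr_def, div_le_one hd1]; linarith
  have hkr0 : (0:ℝ) < (k:ℝ) * r^d := lt_of_lt_of_le hd1 hkey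
  set S1 : Finset V := S.filter (G.Adj v) with hS1_def
  set S2 : Finset V := S \ S1 with hS2_def
  have hS1sub : S1 ⊆ S := Finset.filter_subset _ _
  have hS2sub : S2 ⊆ S := Finset.sdiff_subset
  have hS2adj : ∀ w ∈ S2, ¬ G.Adj v w := by
    intro w hw
    rw [hS2_def, Finset.mem_sdiff, hS1_def, Finset.mem_filter] at hw
    exact fun hc => hw.2 ⟨hw.1, hc⟩
  have hvS2 : v ∉ S2 := fun h => hv (hS2sub h)
  have hexact : ((hatC F S2 ∩ hatA F v).card : ℝ) * (k:ℝ) = ((hatC F S2).card : ℝ) := by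
    exact_mod_cast congrArg (Nat.cast : ℕ → ℝ) (card_indep G F hF hvS2 hS2adj)
  -- chain lemma
  have chain : ∀ U : Finset V, U ⊆ S1 →
      r ^ U.card * ((hatC F S2).card : ℝ) ≤ ((hatC F (S2 ∪ U)).card : ℝ) := by
    intro U
    induction U using Finset.induction_on with
    | empty => intro _; simp
    | @insert a U ha ih =>
      intro hsub
      have haS1 : a ∈ S1 := hsub (Finset.mem_insert_self a U)
      have hU : U ⊆ S1 := fun x hx => hsub (Finset.mem_insert_of_mem hx)
      have haS2 : a ∉ S2 := by
        rw [hS2_def, Finset.mem_sdiff]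
        exact fun h => h.2 haS1
      have haT : a ∉ S2 ∪ U := by
        rw [Finset.mem_union]
        rintro (h | h)
        · exact haS2 h
        · exact ha h
      have hTS : S2 ∪ U ⊂ S := by
        refine Finset.ssubset_iff_of_subset (Finset.union_subset hS2sub (hU.trans hS1sub)) |>.2 ?_
        exact ⟨a, hS1sub haS1, haT⟩
      have hIH := IH (S2 ∪ U) hTS a haT
      set X : ℝ := ((hatC F (S2 ∪ U)).card : ℝ) with hX
      set Y : ℝ := ((hatC F (S2 ∪ U) ∩ hatA F a).card : ℝ) with hY
      have hY0 : 0 ≤ Y := Nat.cast_nonneg _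
      have h6 : Y * ((d:ℝ)+1) ≤ X := le_trans (mul_le_mul_of_nonneg_left hkey hY0) hIH
      have hcard : ((hatC F (S2 ∪ insert a U)).card : ℝ) = X - Y := by
        rw [Finset.union_insert, card_hatC_insert_real]
      rw [hcard, Finset.card_insert_of_notMem ha, pow_succ]
      have hub : r ^ U.card * ((hatC F S2).card : ℝ) ≤ X := ih hU
      calc r ^ U.card * r * ((hatC F S2).card : ℝ)
          = r * (r ^ U.card * ((hatC F S2).card : ℝ)) := by ring
        _ ≤ r * X := mul_le_mul_of_nonneg_left hub hr0
        _ ≤ X - Y := by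
            rw [hr_def, div_mul_eq_mul_div, div_le_iff₀ hd1]
            have hX0 : 0 ≤ X := Nat.cast_nonneg _
            nlinarith
  -- assemble
  have hS1card : S1.card ≤ d := by
    have hsub : S1 ⊆ G.neighborFinset v := by
      intro w hw
      rw [hS1_def, Finset.mem_filter] at hw
      exact (G.mem_neighborFinset v w).2 hw.2
    calc S1.card ≤ (G.neighborFinset v).card := Finset.card_le_card hsub
      _ = G.degree v := G.card_neighborFinset_eq_degree v
      _ ≤ d := hdeg v
  have hSunion : S2 ∪ S1 = S := by
    rw [hS2_def, Finset.sdiff_union_of_subset hS1sub]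
  have hchain := chain S1 (le_refl S1)
  rw [hSunion] at hchain
  have hsubA : hatC F S ∩ hatA F v ⊆ hatC F S2 ∩ hatA F v :=
    Finset.inter_subset_inter (hatC_anti hS2sub) (le_refl _)
  have hpow : r ^ d ≤ r ^ S1.card := pow_le_pow_of_le_one hr0 hr1 hS1card
  calc ((hatC F S ∩ hatA F v).card : ℝ) * ((k:ℝ) * r^d)
      ≤ ((hatC F S2 ∩ hatA F v).card : ℝ) * ((k:ℝ) * r^d) := by
        apply mul_le_mul_of_nonneg_right _ hkr0.le
        exact_mod_cast Finset.card_le_card hsubA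
    _ = ((hatC F S2).card : ℝ) * r^d := by rw [← mul_assoc, hexact]
    _ ≤ ((hatC F S2).card : ℝ) * r^S1.card :=
        mul_le_mul_of_nonneg_left hpow (Nat.cast_nonneg _)
    _ = r^S1.card * ((hatC F S2).card : ℝ) := by ring
    _ ≤ ((hatC F S).card : ℝ) := hchain

/-- Positivity: every set of constraints is avoidable. -/
lemma hat_pos (G : SimpleGraph V) [DecidableRel G.Adj] (F : V → (V → Fin k) → Fin k)
    (hF : ∀ v : V, ∀ x y : V → Fin k, (∀ u : V, G.Adj v u → x u = y u) → F v x = F v y)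
    (hkpos : 0 < k) (d : ℕ) (hdeg : ∀ v, G.degree v ≤ d)
    (hkey : ((d:ℝ)+1) ≤ (k:ℝ) * ((d:ℝ)/((d:ℝ)+1))^d)
    (hkey2 : (1:ℝ) < (k:ℝ) * ((d:ℝ)/((d:ℝ)+1))^d)
    (S : Finset V) : 0 < (hatC F S).card := by
  induction S using Finset.induction_on with
  | empty =>
    have : Nonempty (V → Fin k) := ⟨fun _ => ⟨0, hkpos⟩⟩
    have huniv : hatC F (∅ : Finset V) = Finset.univ := by
      ext x; simp [hatC]
    rw [huniv]
    exact Finset.univ_nonempty.card_pos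
  | @insert a S ha ih =>
    have hb := hat_bound G F hF d hdeg hkey S a ha
    set X : ℝ := ((hatC F S).card : ℝ) with hX
    set Y : ℝ := ((hatC F S ∩ hatA F a).card : ℝ) with hY
    have hX0 : (0:ℝ) < X := by rw [hX]; exact_mod_cast ih
    have hY0 : (0:ℝ) ≤ Y := Nat.cast_nonneg _
    have hlt : Y < X := by nlinarith
    have : (0:ℝ) < ((hatC F (insert a S)).card : ℝ) := by
      rw [card_hatC_insert_real]; linarith
    exact_mod_cast this

end HatLLL

lemma ratio_pow_ge (d : ℕ) : Real.exp (-1) ≤ ((d:ℝ)/((d:ℝ)+1)) ^ d := by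
  rcases Nat.eq_zero_or_pos d with rfl | hd
  · simpa using Real.exp_le_one_iff.2 (by norm_num)
  · have hd0 : (0:ℝ) < d := by exact_mod_cast hd
    have h1 : Real.exp (-(1/(d:ℝ))) ≤ (d:ℝ)/((d:ℝ)+1) := by
      have h2 : 1/(d:ℝ) + 1 ≤ Real.exp (1/(d:ℝ)) := Real.add_one_le_exp _
      have h3 : (0:ℝ) < 1/(d:ℝ) + 1 := by positivity
      have h4 : Real.exp (-(1/(d:ℝ))) = (Real.exp (1/(d:ℝ)))⁻¹ := by
        rw [Real.exp_neg]
      rw [h4]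
      have h5 : (Real.exp (1/(d:ℝ)))⁻¹ ≤ (1/(d:ℝ) + 1)⁻¹ :=
        inv_anti₀ h3 h2
      refine h5.trans_eq ?_
      rw [eq_div_iff (by positivity)]
      field_simp
      ring
    calc Real.exp (-1) = Real.exp (-(1/(d:ℝ))) ^ d := by
          rw [← Real.exp_nat_mul]
          congr 1
          field_simp
      _ ≤ ((d:ℝ)/((d:ℝ)+1)) ^ d := pow_le_pow_left₀ (Real.exp_nonneg _) h1 d

/-- Every graph `G` with maximum degree `Δ` satisfies `μ(G) ≤ e(Δ+1)`:
if the number of colors `k` satisfies `e·(Δ+1)·(1/k) ≤ 1`, then for every strategy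
family there is a coloring for which all guesses are wrong. -/
theorem hat_guessing_LLL_bound {V : Type*} [Fintype V] (G : SimpleGraph V)
    [DecidableRel G.Adj] (k : ℕ) (hkpos : 0 < k)
    (hk : Real.exp 1 * ((G.maxDegree : ℝ) + 1) * (1 / (k : ℝ)) ≤ 1)
    (F : V → (V → Fin k) → Fin k)
    (hF : ∀ v : V, ∀ x y : V → Fin k, (∀ u : V, G.Adj v u → x u = y u) → F v x = F v y) :
    ∃ x : V → Fin k, ∀ v : V, F v x ≠ x v := by
  classical
  set d : ℕ := G.maxDegree with hd_def
  have hk0 : (0:ℝ) < (k:ℝ) := by exact_mod_cast hkpos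
  have hek : Real.exp 1 * ((d:ℝ)+1) ≤ (k:ℝ) := by
    rw [mul_one_div, div_le_one hk0] at hk
    exact hk
  have he2 : (2:ℝ) ≤ Real.exp 1 := by
    have := Real.add_one_le_exp 1
    linarith
  have hkey : ((d:ℝ)+1) ≤ (k:ℝ) * ((d:ℝ)/((d:ℝ)+1))^d := by
    have h1 : (Real.exp 1 * ((d:ℝ)+1)) * Real.exp (-1) = (d:ℝ)+1 := by
      rw [mul_comm (Real.exp 1), mul_assoc, ← Real.exp_add]
      norm_num
    calc ((d:ℝ)+1) = (Real.exp 1 * ((d:ℝ)+1)) * Real.exp (-1) := h1.symm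
      _ ≤ (k:ℝ) * ((d:ℝ)/((d:ℝ)+1))^d :=
        mul_le_mul hek (ratio_pow_ge d) (Real.exp_nonneg _) (Nat.cast_nonneg _)
  have hkey2 : (1:ℝ) < (k:ℝ) * ((d:ℝ)/((d:ℝ)+1))^d := by
    rcases Nat.eq_zero_or_pos d with hd0 | hd1
    · rw [hd0] at hkey hek ⊢
      push_cast at hek ⊢
      simp only [pow_zero, mul_one] at *
      linarith
    · have : (2:ℝ) ≤ (d:ℝ)+1 := by
        have : (1:ℝ) ≤ (d:ℝ) := by exact_mod_cast hd1
        linarith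
      linarith
  have hpos := hat_pos G F hF hkpos d (fun v => G.degree_le_maxDegree v) hkey hkey2
    Finset.univ
  obtain ⟨x, hx⟩ := Finset.card_pos.1 hpos
  exact ⟨x, fun v => mem_hatC.1 hx v (Finset.mem_univ v)⟩
end

section
/- Let T be a tree rooted at r on n ≥ 1 vertices, let k ≥ 3, and fix strategies F_i for all vertices. For every color c that is not dominant for F_r, there exists a coloring f of T with f(r) = c such that F_i(f) ≠ f(i) for every vertex i. Consequently, every tree T with at least two vertices satisfies μ(T) = 2. -/
/-- A color `d` is dominant for a strategy `F` if `F⁻¹(d)` contains a combinatorial cube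
all of whose components have size at least `k−1`. -/
def DominantColor {V : Type*} [Fintype V] {k : ℕ} (F : (V → Fin k) → Fin k)
    (d : Fin k) : Prop :=
  ∃ C : V → Finset (Fin k), (∀ i : V, k - 1 ≤ (C i).card) ∧
    ∀ x : V → Fin k, (∀ i : V, x i ∈ C i) → F x = d

set_option linter.unusedSectionVars false
namespace TreeHatAux

open SimpleGraph

variable {V : Type*} [Fintype V]

/-- `i` is a descendant of `u` with respect to the parent map `par`. -/
def Desc (par : V → V) (u i : V) : Prop := ∃ n : ℕ, par^[n] i = u

lemma desc_refl (par : V → V) (u : V) : Desc par u u := ⟨0, rfl⟩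

lemma desc_of_par {par : V → V} {u i j : V} (h : Desc par u i) (hj : par j = i) :
    Desc par u j := by
  obtain ⟨n, hn⟩ := h
  exact ⟨n + 1, by rw [Function.iterate_succ_apply, hj, hn]⟩

lemma desc_par_of_ne {par : V → V} {u i : V} (h : Desc par u i) (hne : i ≠ u) :
    Desc par u (par i) := by
  obtain ⟨n, hn⟩ := h
  cases n with
  | zero => exact absurd hn hne
  | succ m => exact ⟨m, by rwa [Function.iterate_succ_apply] at hn⟩

lemma desc_trans {par : V → V} {u w i : V} (h1 : Desc par u i) (h2 : Desc par w u) :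
    Desc par w i := by
  obtain ⟨a, ha⟩ := h1
  obtain ⟨b, hb⟩ := h2
  exact ⟨b + a, by rw [Function.iterate_add_apply, ha, hb]⟩

section Rho

variable {par : V → V} {r : V} {ρ : V → ℕ}
variable (hpr : par r = r) (hρ : ∀ u, u ≠ r → ρ (par u) < ρ u)

include hpr hρ

lemma rho_par_le (u : V) : ρ (par u) ≤ ρ u := by
  by_cases h : u = r
  · subst h; rw [hpr]
  · exact (hρ u h).le

lemma rho_le_of_desc {u i : V} (h : Desc par u i) : ρ u ≤ ρ i := by
  obtain ⟨n, hn⟩ := h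
  subst hn
  induction n with
  | zero => simp
  | succ m ih =>
    rw [Function.iterate_succ_apply']
    exact (rho_par_le hpr hρ _).trans ih

lemma child_ne_root {u w : V} (hw : par w = u) (hwu : w ≠ u) : w ≠ r := by
  intro h
  subst h
  rw [hpr] at hw
  exact hwu hw

lemma not_desc_of_child {u w : V} (hw : par w = u) (hwu : w ≠ u) : ¬ Desc par w u := by
  intro h
  have h1 : ρ u < ρ w := by
    have := hρ w (child_ne_root hpr hρ hw hwu)
    rwa [hw] at this
  exact absurd (rho_le_of_desc hpr hρ h) (not_le.mpr h1)

lemma not_desc_par {u : V} (hu : u ≠ r) : ¬ Desc par u (par u) := by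
  intro h
  exact absurd (rho_le_of_desc hpr hρ h) (not_le.mpr (hρ u hu))

lemma child_unique_aux {u w₁ w₂ i : V} {n₁ n₂ : ℕ}
    (h1 : par w₁ = u) (h2 : par w₂ = u) (h2u : w₂ ≠ u)
    (e₁ : par^[n₁] i = w₁) (e₂ : par^[n₂] i = w₂) (hle : n₁ ≤ n₂) : w₁ = w₂ := by
  have key : par^[n₂ - n₁] w₁ = w₂ := by
    rw [← e₁, ← Function.iterate_add_apply, Nat.sub_add_cancel hle]
    exact e₂
  rcases Nat.eq_zero_or_pos (n₂ - n₁) with hm | hm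
  · rw [hm] at key; exact key
  · exfalso
    obtain ⟨m', hm'⟩ : ∃ m', n₂ - n₁ = m' + 1 := ⟨n₂ - n₁ - 1, by omega⟩
    rw [hm', Function.iterate_succ_apply, h1] at key
    exact not_desc_of_child hpr hρ h2 h2u ⟨m', key⟩

lemma child_unique {u w₁ w₂ i : V}
    (h1 : par w₁ = u) (h1u : w₁ ≠ u) (h2 : par w₂ = u) (h2u : w₂ ≠ u)
    (d1 : Desc par w₁ i) (d2 : Desc par w₂ i) : w₁ = w₂ := by
  obtain ⟨n₁, e₁⟩ := d1
  obtain ⟨n₂, e₂⟩ := d2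
  rcases le_total n₁ n₂ with h | h
  · exact child_unique_aux hpr hρ h1 h2 h2u e₁ e₂ h
  · exact (child_unique_aux hpr hρ h2 h1 h1u e₂ e₁ h).symm

lemma exists_child_of_desc {u i : V} (h : Desc par u i) (hne : i ≠ u) :
    ∃ w, par w = u ∧ w ≠ u ∧ Desc par w i := by
  classical
  have hex : ∃ n, par^[n] i = u := h
  have hn : par^[Nat.find hex] i = u := Nat.find_spec hex
  have hn0 : Nat.find hex ≠ 0 := by
    intro h0
    rw [h0] at hn
    exact hne hn
  refine ⟨par^[Nat.find hex - 1] i, ?_, ?_, ⟨Nat.find hex - 1, rfl⟩⟩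
  · rw [← Function.iterate_succ_apply' par (Nat.find hex - 1) i,
      Nat.succ_eq_add_one, Nat.sub_add_cancel (Nat.pos_of_ne_zero hn0)]
    exact hn
  · intro heq
    exact Nat.find_min hex (by omega) heq

lemma desc_root (i : V) : Desc par r i := by
  generalize hm : ρ i = m
  induction m using Nat.strong_induction_on generalizing i with
  | _ m ih =>
    by_cases h : i = r
    · exact h ▸ desc_refl par r
    · obtain ⟨n, hn⟩ := ih (ρ (par i)) (hm ▸ hρ i h) (par i) rfl
      exact ⟨n + 1, by rwa [Function.iterate_succ_apply]⟩

lemma measure_lt {u w : V} (hw : par w = u) (hwu : w ≠ u) :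
    {i | Desc par w i}.ncard < {i | Desc par u i}.ncard := by
  have hsub : {i | Desc par w i} ⊆ {i | Desc par u i} := by
    intro i hi
    exact desc_trans hi ⟨1, by simpa using hw⟩
  refine Set.ncard_lt_ncard ?_ (Set.toFinite _)
  rw [Set.ssubset_iff_of_subset hsub]
  exact ⟨u, desc_refl par u, not_desc_of_child hpr hρ hw hwu⟩

end Rho

end TreeHatAux

namespace TreeHatAux
section Core

variable {V : Type*} [Fintype V] [DecidableEq V] {k : ℕ}

/-- A "good" pair for vertex `u` with outside color `a`: there is a coloring with value `d`
at `u`, constant `a` off the subtree of `u`, that defeats every guesser in the subtree. -/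
def Good (par : V → V) (F : V → (V → Fin k) → Fin k) (u : V) (a d : Fin k) : Prop :=
  ∃ f : V → Fin k, f u = d ∧ (∀ i, ¬ Desc par u i → f i = a) ∧
    (∀ i, Desc par u i → F i f ≠ f i)

open Classical in
/-- The set of colors available at `u` given outside color `a`. -/
noncomputable def Avail (par : V → V) (F : V → (V → Fin k) → Fin k) (u : V) (a : Fin k) :
    Finset (Fin k) :=
  Finset.univ.filter (fun d => Good par F u a d)

lemma mem_avail {par : V → V} {F : V → (V → Fin k) → Fin k} {u : V} {a d : Fin k} :
    d ∈ Avail par F u a ↔ Good par F u a d := by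
  simp [Avail]

variable {par : V → V} {r : V} {ρ : V → ℕ} {T : SimpleGraph V}
  {F : V → (V → Fin k) → Fin k}
variable (hpr : par r = r) (hρ : ∀ u, u ≠ r → ρ (par u) < ρ u)
  (hadj : ∀ u v, T.Adj u v → (u ≠ r ∧ par u = v) ∨ (v ≠ r ∧ par v = u))
  (hF : ∀ v x y, (∀ u, T.Adj v u → x u = y u) → F v x = F v y)

include hpr hρ hadj hF

lemma good_of_probe (u : V) (a d : Fin k) (x : V → Fin k)
    (hx : ∀ w, par w = u → w ≠ u → Good par F w d (x w))
    (hprobe : F u (fun i => if par i = u ∧ i ≠ u then x i else a) ≠ d) :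
    Good par F u a d := by
  classical
  -- chosen subtree colorings for the children
  set g : V → V → Fin k :=
    fun w => if h : Good par F w d (x w) then h.choose else fun _ => d with hgdef
  have hg : ∀ w, Good par F w d (x w) →
      (g w) w = x w ∧ (∀ j, ¬ Desc par w j → g w j = d) ∧
      (∀ j, Desc par w j → F j (g w) ≠ g w j) := by
    intro w h
    simp only [hgdef, dif_pos h]
    exact h.choose_spec
  set f : V → Fin k := fun i =>
    if i = u then d
    else if h : ∃ w, par w = u ∧ w ≠ u ∧ Desc par w i then g h.choose i else a with hfdef
  have hfu : f u = d := by simp [hfdef]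
  have hfout : ∀ i, ¬ Desc par u i → f i = a := by
    intro i hi
    have hiu : i ≠ u := fun h => hi (h ▸ desc_refl par u)
    have hex : ¬ ∃ w, par w = u ∧ w ≠ u ∧ Desc par w i := by
      rintro ⟨w, hw, hwu, hdw⟩
      exact hi (desc_trans hdw ⟨1, by simpa using hw⟩)
    simp [hfdef, hiu, hex]
  have hfval : ∀ w i, par w = u → w ≠ u → Desc par w i → f i = g w i := by
    intro w i hw hwu hdi
    have hiu : i ≠ u := by
      intro h
      exact not_desc_of_child hpr hρ hw hwu (h ▸ hdi)
    have hex : ∃ w', par w' = u ∧ w' ≠ u ∧ Desc par w' i := ⟨w, hw, hwu, hdi⟩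
    have hch := hex.choose_spec
    have : hex.choose = w :=
      child_unique hpr hρ hch.1 hch.2.1 hw hwu hch.2.2 hdi
    simp only [hfdef, if_neg hiu, dif_pos hex, this]
  refine ⟨f, hfu, hfout, ?_⟩
  intro i hdi
  by_cases hiu : i = u
  · subst hiu
    have hagree : ∀ j, T.Adj i j →
        f j = (fun i' => if par i' = i ∧ i' ≠ i then x i' else a) j := by
      intro j hj
      rcases hadj i j hj with ⟨hur, hpu⟩ | ⟨hjr, hpj⟩
      · -- j is the parent of i
        have hnd : ¬ Desc par i j := hpu ▸ not_desc_par hpr hρ hur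
        have h1 : f j = a := hfout j hnd
        have h2 : ¬ (par j = i ∧ j ≠ i) := by
          rintro ⟨hpj, hji⟩
          exact hnd ⟨1, by simpa using hpj⟩
        simp [h1, h2]
      · -- j is a child of i
        have hju : j ≠ i := hj.ne'
        have hgood := hx j hpj hju
        have h1 : f j = g j j := hfval j j hpj hju (desc_refl par j)
        rw [h1, (hg j hgood).1]
        simp [hpj, hju]
    rw [hF i f _ hagree, hfu]
    exact hprobe
  · obtain ⟨w, hw, hwu, hdw⟩ := exists_child_of_desc hpr hρ hdi hiu
    have hgood := hx w hw hwu
    have hgw := hg w hgood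
    have hagree : ∀ j, T.Adj i j → f j = g w j := by
      intro j hj
      rcases hadj i j hj with ⟨hir, hpi⟩ | ⟨hjr, hpj⟩
      · -- j is the parent of i
        by_cases hiw : i = w
        · subst hiw
          have hju : j = u := by rw [← hpi, hw]
          subst hju
          rw [hfu, hgw.2.1 j (not_desc_of_child hpr hρ hw hwu)]
        · exact hfval w j hw hwu (hpi ▸ desc_par_of_ne hdw hiw)
      · -- j is a child of i
        exact hfval w j hw hwu (desc_of_par hdw hpj)
    rw [hF i f _ hagree, hfval w i hw hwu hdw]
    exact hgw.2.2 i hdw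

lemma avail_card (hk : 3 ≤ k) : ∀ (u : V) (a : Fin k), k - 1 ≤ (Avail par F u a).card := by
  suffices H : ∀ (n : ℕ) (u : V) (a : Fin k), {i | Desc par u i}.ncard = n →
      k - 1 ≤ (Avail par F u a).card by
    intro u a; exact H _ u a rfl
  intro n
  induction n using Nat.strong_induction_on with
  | _ n ih =>
  intro u a hn
  classical
  have key : ∀ d : Fin k, ¬ Good par F u a d → ∀ x : V → Fin k,
      (∀ w, par w = u → w ≠ u → Good par F w d (x w)) →
      F u (fun i => if par i = u ∧ i ≠ u then x i else a) = d := by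
    intro d hd x hx
    by_contra h
    exact hd (good_of_probe hpr hρ hadj hF u a d x hx h)
  have uniq : ∀ d₁ d₂ : Fin k, ¬ Good par F u a d₁ → ¬ Good par F u a d₂ → d₁ = d₂ := by
    intro d₁ d₂ h1 h2
    have hinter : ∀ w, par w = u → w ≠ u →
        ((Avail par F w d₁) ∩ (Avail par F w d₂)).Nonempty := by
      intro w hw hwu
      have hlt : {i | Desc par w i}.ncard < n := hn ▸ measure_lt hpr hρ hw hwu
      have c1 := ih _ hlt w d₁ rfl
      have c2 := ih _ hlt w d₂ rfl
      have hcup : ((Avail par F w d₁) ∪ (Avail par F w d₂)).card ≤ k := by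
        refine le_trans (Finset.card_le_univ _) ?_
        simp
      have := Finset.card_union_add_card_inter (Avail par F w d₁) (Avail par F w d₂)
      rw [← Finset.card_pos]
      omega
    set x : V → Fin k := fun w =>
      if h : ((Avail par F w d₁) ∩ (Avail par F w d₂)).Nonempty then h.choose
      else ⟨0, by omega⟩ with hxdef
    have hx : ∀ j : Fin 2, ∀ w, par w = u → w ≠ u →
        Good par F w (if j = 0 then d₁ else d₂) (x w) := by
      intro j w hw hwu
      have hne := hinter w hw hwu
      have hmem := hne.choose_spec
      rw [Finset.mem_inter] at hmem
      have hxw : x w = hne.choose := by simp [hxdef, dif_pos hne]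
      fin_cases j
      · simpa [hxw] using mem_avail.mp hmem.1
      · simpa [hxw] using mem_avail.mp hmem.2
    have e1 := key d₁ h1 x (by simpa using hx 0)
    have e2 := key d₂ h2 x (by simpa using hx 1)
    rw [← e1, ← e2]
  have hcompl : ((Avail par F u a)ᶜ).card ≤ 1 := by
    rw [Finset.card_le_one]
    intro b hb c hc
    rw [Finset.mem_compl, mem_avail] at hb hc
    exact uniq b c hb hc
  have h1 : ((Avail par F u a)ᶜ).card = Fintype.card (Fin k) - (Avail par F u a).card :=
    Finset.card_compl _
  have h2 : (Avail par F u a).card ≤ Fintype.card (Fin k) := Finset.card_le_univ _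
  rw [Fintype.card_fin] at h1 h2
  omega

/-- Main demonic-coloring lemma at the root. -/
lemma root_demonic (hk : 3 ≤ k) (c : Fin k) (hc : ¬ DominantColor (F r) c) :
    ∃ f : V → Fin k, f r = c ∧ ∀ i, F i f ≠ f i := by
  classical
  set C : V → Finset (Fin k) :=
    fun i => if par i = r ∧ i ≠ r then Avail par F i c else Finset.univ with hCdef
  have hC : ∀ i, k - 1 ≤ (C i).card := by
    intro i
    by_cases h : par i = r ∧ i ≠ r
    · simpa [hCdef, h] using avail_card hpr hρ hadj hF hk i c
    · simp [hCdef, h]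
  rw [DominantColor] at hc
  push_neg at hc
  obtain ⟨x, hx, hxc⟩ := hc C hC
  have hx' : ∀ w, par w = r → w ≠ r → Good par F w c (x w) := by
    intro w hw hwr
    have hmem : x w ∈ Avail par F w c := by simpa [hCdef, hw, hwr] using hx w
    exact mem_avail.mp hmem
  have hprobe : F r (fun i => if par i = r ∧ i ≠ r then x i else c) = F r x := by
    refine hF r _ x ?_
    intro j hj
    rcases hadj r j hj with ⟨hrr, _⟩ | ⟨hjr, hpj⟩
    · exact absurd rfl hrr
    · simp [hpj, hjr]
  obtain ⟨f, hf1, _, hf3⟩ :=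
    good_of_probe hpr hρ hadj hF r c c x hx' (by rw [hprobe]; exact hxc)
  exact ⟨f, hf1, fun i => hf3 i (desc_root hpr hρ i)⟩

end Core

end TreeHatAux


namespace TreeHatAux

open SimpleGraph

variable {V : Type*} [DecidableEq V]

/-- In a tree, every path realizes the distance. -/
lemma path_length_eq_dist {T : SimpleGraph V} (hT : T.IsTree) {x y : V}
    (p : T.Walk x y) (hp : p.IsPath) : p.length = T.dist x y := by
  obtain ⟨q, hq, hql⟩ := hT.isConnected.exists_path_of_dist x y
  have : p = q := (hT.existsUnique_path x y).unique hp hq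
  rw [this, hql]

/-- Vertices on a shortest path are at distance at most the length from the far end. -/
lemma dist_le_of_mem_support {T : SimpleGraph V} {x y u : V}
    (p : T.Walk x y) (h : u ∈ p.support) : T.dist u y ≤ p.length := by
  have := dist_le (p.dropUntil u h)
  have hlen := p.length_dropUntil_le h
  omega

/-- In a tree, an adjacent pair of vertices has distinct distances to any root. -/
lemma adj_dist_ne {T : SimpleGraph V} (hT : T.IsTree) (r : V) {u v : V}
    (h : T.Adj u v) : T.dist r u ≠ T.dist r v := by
  intro heq
  obtain ⟨q, hq, hql⟩ := hT.isConnected.exists_path_of_dist v r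
  by_cases hu : u ∈ q.support
  · -- drop/take decomposition forces u = v
    have hdrop : (q.dropUntil u hu).length = T.dist u r :=
      path_length_eq_dist hT _ (hq.dropUntil hu)
    have hspec := congrArg Walk.length (q.take_spec hu)
    rw [Walk.length_append] at hspec
    have huv : T.dist u r = T.dist v r := by
      rw [SimpleGraph.dist_comm, heq, SimpleGraph.dist_comm]
    have htake : (q.takeUntil u hu).length = 0 := by omega
    exact h.ne (Walk.eq_of_length_eq_zero htake).symm
  · have hcons : (Walk.cons h q).IsPath := hq.cons hu
    have := path_length_eq_dist hT _ hcons
    rw [Walk.length_cons, hql] at this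
    have huv : T.dist u r = T.dist v r := by
      rw [SimpleGraph.dist_comm, heq, SimpleGraph.dist_comm]
    omega

/-- In a tree, the neighbor closer to the root is unique. -/
lemma down_neighbor_unique {T : SimpleGraph V} (hT : T.IsTree) (r : V) {u v₁ v₂ : V}
    (h₁ : T.Adj u v₁) (h₂ : T.Adj u v₂)
    (hd₁ : T.dist r v₁ + 1 = T.dist r u) (hd₂ : T.dist r v₂ + 1 = T.dist r u) :
    v₁ = v₂ := by
  have build : ∀ (v : V) (h : T.Adj u v), T.dist r v + 1 = T.dist r u →
      ∃ q : T.Walk v r, (Walk.cons h q).IsPath := by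
    intro v h hd
    obtain ⟨q, hq, hql⟩ := hT.isConnected.exists_path_of_dist v r
    refine ⟨q, hq.cons ?_⟩
    intro hmem
    have h1 := dist_le_of_mem_support q hmem
    rw [hql] at h1
    have h2 : T.dist v r = T.dist r v := SimpleGraph.dist_comm
    have h3 : T.dist u r = T.dist r u := SimpleGraph.dist_comm
    omega
  obtain ⟨q₁, hq₁⟩ := build v₁ h₁ hd₁
  obtain ⟨q₂, hq₂⟩ := build v₂ h₂ hd₂
  have heq : Walk.cons h₁ q₁ = Walk.cons h₂ q₂ :=
    (hT.existsUnique_path u r).unique hq₁ hq₂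
  have := congrArg (fun w : T.Walk u r => w.getVert 1) heq
  simpa [Walk.getVert_cons _ _ one_ne_zero] using this

/-- Extract a parent map from a rooted tree. -/
lemma tree_structure {T : SimpleGraph V} (hT : T.IsTree) (r : V) :
    ∃ par : V → V, par r = r ∧ (∀ u, u ≠ r → T.dist r (par u) < T.dist r u) ∧
      ∀ u v, T.Adj u v → (u ≠ r ∧ par u = v) ∨ (v ≠ r ∧ par v = u) := by
  classical
  have hconn := hT.isConnected
  have hpar : ∀ u, u ≠ r → ∃ v, T.Adj u v ∧ T.dist r v + 1 = T.dist r u := by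
    intro u hu
    obtain ⟨p, hp, hpl⟩ := hconn.exists_path_of_dist u r
    cases p with
    | nil => exact absurd rfl hu
    | @cons _ v _ h q =>
      refine ⟨v, h, ?_⟩
      have hq : q.length = T.dist v r := path_length_eq_dist hT q hp.of_cons
      rw [Walk.length_cons] at hpl
      have h2 : T.dist v r = T.dist r v := SimpleGraph.dist_comm
      have h3 : T.dist u r = T.dist r u := SimpleGraph.dist_comm
      omega
  choose par' hpar1 hpar2 using hpar
  refine ⟨fun u => if h : u = r then r else par' u h, by simp, ?_, ?_⟩
  · intro u hu
    simp only [dif_neg hu]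
    have := hpar2 u hu
    omega
  · intro u v huv
    have hne := adj_dist_ne hT r huv
    have ht1 : T.dist r u ≤ T.dist r v + 1 := by
      have := hconn.dist_triangle (u := r) (v := v) (w := u)
      have h1 : T.dist v u = 1 := dist_eq_one_iff_adj.mpr huv.symm
      omega
    have ht2 : T.dist r v ≤ T.dist r u + 1 := by
      have := hconn.dist_triangle (u := r) (v := u) (w := v)
      have h1 : T.dist u v = 1 := dist_eq_one_iff_adj.mpr huv
      omega
    rcases lt_or_gt_of_ne hne with hlt | hgt
    · -- dist r u < dist r v : v's parent is u
      right
      have hvr : v ≠ r := by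
        intro h; subst h
        simp [SimpleGraph.dist_self] at hlt
      refine ⟨hvr, ?_⟩
      simp only [dif_neg hvr]
      exact down_neighbor_unique hT r (hpar1 v hvr) huv.symm (hpar2 v hvr) (by omega)
    · -- u's parent is v
      left
      have hur : u ≠ r := by
        intro h; subst h
        simp [SimpleGraph.dist_self] at hgt
      refine ⟨hur, ?_⟩
      simp only [dif_neg hur]
      exact down_neighbor_unique hT r (hpar1 u hur) huv (hpar2 u hur) (by omega)

end TreeHatAux

/-- Let `T` be a tree rooted at `r`, let `k ≥ 3`, and fix strategies `F_i`.
For every color `c` that is not dominant for `F_r` there is a demonic coloring `f` with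
`f(r) = c`.  Consequently every tree with at least two vertices satisfies `μ(T) = 2`. -/
theorem tree_demonic_coloring_and_mu_eq_two {V : Type*} [Fintype V]
    (T : SimpleGraph V) (hT : T.IsTree) (r : V) :
    (∀ k : ℕ, 3 ≤ k →
      ∀ F : V → (V → Fin k) → Fin k,
        (∀ v : V, ∀ x y : V → Fin k, (∀ u : V, T.Adj v u → x u = y u) → F v x = F v y) →
        ∀ c : Fin k, ¬ DominantColor (F r) c →
          ∃ f : V → Fin k, f r = c ∧ ∀ i : V, F i f ≠ f i) ∧
    (2 ≤ Fintype.card V → hatGuessingNumber T = 2) := by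
  classical
  have hconn := hT.isConnected
  obtain ⟨par, hpr, hρ, hadj⟩ := TreeHatAux.tree_structure hT r
  have hpart1 : ∀ k : ℕ, 3 ≤ k →
      ∀ F : V → (V → Fin k) → Fin k,
        (∀ v : V, ∀ x y : V → Fin k, (∀ u : V, T.Adj v u → x u = y u) → F v x = F v y) →
        ∀ c : Fin k, ¬ DominantColor (F r) c →
          ∃ f : V → Fin k, f r = c ∧ ∀ i : V, F i f ≠ f i := by
    intro k hk F hF c hc
    exact TreeHatAux.root_demonic hpr hρ hadj hF hk c hc
  refine ⟨hpart1, ?_⟩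
  intro hcard
  obtain ⟨a, b, hab⟩ : ∃ a b : V, T.Adj a b := by
    obtain ⟨v, hv⟩ := Fintype.exists_ne_of_one_lt_card (by omega) r
    obtain ⟨p, hp, hl⟩ := hconn.exists_path_of_dist r v
    cases p with
    | nil => exact absurd rfl hv
    | cons h q => exact ⟨_, _, h⟩
  have h2mem : 2 ∈ {k : ℕ | ∃ F : V → (V → Fin k) → Fin k,
      (∀ v : V, ∀ x y : V → Fin k, (∀ u : V, T.Adj v u → x u = y u) → F v x = F v y) ∧
      (∀ x : V → Fin k, ∃ v : V, F v x = x v)} := by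
    refine ⟨fun v x => if v = a then x b else if v = b then x a + 1 else 0, ?_, ?_⟩
    · intro v x y hxy
      by_cases hva : v = a
      · subst hva
        have h1 : x b = y b := hxy b hab
        simp [h1]
      · by_cases hvb : v = b
        · subst hvb
          have h1 : x a = y a := hxy a hab.symm
          simp [hva, h1]
        · simp [hva, hvb]
    · intro x
      by_cases h : x b = x a + 1
      · refine ⟨b, ?_⟩
        simp only [if_neg hab.ne', if_pos rfl]
        exact h.symm
      · have hx : x b = x a := by
          have : ∀ p q : Fin 2, q ≠ p + 1 → q = p := by decide
          exact this _ _ h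
        exact ⟨a, by simp [hx]⟩
  have hub : ∀ m ∈ {k : ℕ | ∃ F : V → (V → Fin k) → Fin k,
      (∀ v : V, ∀ x y : V → Fin k, (∀ u : V, T.Adj v u → x u = y u) → F v x = F v y) ∧
      (∀ x : V → Fin k, ∃ v : V, F v x = x v)}, m ≤ 2 := by
    rintro m ⟨F, hloc, hwin⟩
    by_contra hm
    push_neg at hm
    obtain ⟨m', rfl⟩ : ∃ m', m = m' + 3 := ⟨m - 3, by omega⟩
    have hnd : ∃ c : Fin (m' + 3), ¬ DominantColor (F r) c := by
      by_contra hall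
      push_neg at hall
      obtain ⟨C1, hC1, hC1f⟩ := hall 0
      obtain ⟨C2, hC2, hC2f⟩ := hall 1
      have hint : ∀ i, ((C1 i) ∩ (C2 i)).Nonempty := by
        intro i
        have hcup : ((C1 i) ∪ (C2 i)).card ≤ m' + 3 :=
          le_trans (Finset.card_le_univ _) (by simp)
        have hcui := Finset.card_union_add_card_inter (C1 i) (C2 i)
        have h1 := hC1 i
        have h2 := hC2 i
        rw [← Finset.card_pos]
        omega
      choose x hx using hint
      have e1 := hC1f x (fun i => (Finset.mem_inter.mp (hx i)).1)
      have e2 := hC2f x (fun i => (Finset.mem_inter.mp (hx i)).2)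
      rw [e1] at e2
      exact absurd e2 (by simp [Fin.ext_iff])
    obtain ⟨c, hc⟩ := hnd
    obtain ⟨f, hfr, hdem⟩ := hpart1 (m' + 3) (by omega) F hloc c hc
    obtain ⟨v, hv⟩ := hwin f
    exact hdem v hv
  unfold hatGuessingNumber
  exact le_antisymm (csSup_le ⟨2, h2mem⟩ hub) (le_csSup ⟨2, hub⟩ h2mem)
end

section
/- Let T be a tree rooted at r with color set Γ_k, and let s ≥ 1 with k > s(s+1). For any s-guessing strategy F_r at r (mapping colorings to s-element subsets of Γ_k), there are at most s s-dominant colors, where a color d is s-dominant if the set {x : d ∈ F_r(x)} contains a cube all of whose components have size at least k−s. -/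
/-- A color `d` is `s`-dominant for an `s`-guessing strategy `F` if the set
`{x : d ∈ F x}` contains a combinatorial cube all of whose components have size at
least `k−s`. -/
def SDominantColor {V : Type*} [Fintype V] {k : ℕ} (s : ℕ)
    (F : (V → Fin k) → Finset (Fin k)) (d : Fin k) : Prop :=
  ∃ C : V → Finset (Fin k), (∀ i : V, k - s ≤ (C i).card) ∧
    ∀ x : V → Fin k, (∀ i : V, x i ∈ C i) → d ∈ F x

/-- Let `T` be a tree rooted at `r`, `s ≥ 1` and `k > s(s+1)`.  For any
`s`-guessing strategy `F_r` at `r` there are at most `s` `s`-dominant colors. -/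
theorem tree_at_most_s_dominant_colors {V : Type*} [Fintype V]
    (T : SimpleGraph V) (hT : T.IsTree) (r : V) (k s : ℕ) (hs : 1 ≤ s)
    (hk : s * (s + 1) < k)
    (Fr : (V → Fin k) → Finset (Fin k))
    (hcard : ∀ x : V → Fin k, (Fr x).card ≤ s)
    (hFr : ∀ x y : V → Fin k, (∀ u : V, T.Adj r u → x u = y u) → Fr x = Fr y)
    (D : Finset (Fin k)) (hD : ∀ d ∈ D, SDominantColor s Fr d) :
    D.card ≤ s := by
  by_contra hlt
  push_neg at hlt
  obtain ⟨D', hD'sub, hD'card⟩ : ∃ D' ⊆ D, D'.card = s + 1 :=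
    Finset.exists_subset_card_eq hlt
  have hD' : ∀ d ∈ D', SDominantColor s Fr d := fun d hd => hD d (hD'sub hd)
  choose C hC1 hC2 using hD'
  -- for each vertex i, the s+1 cube components have a common color
  have hcommon : ∀ i : V, ∃ c : Fin k, ∀ (d : Fin k) (hd : d ∈ D'), c ∈ C d hd i := by
    intro i
    by_contra hcon
    push_neg at hcon
    -- the complements of the cube components cover Fin k
    have hcover : (Finset.univ : Finset (Fin k)) ⊆
        D'.attach.biUnion (fun d => (C d.1 d.2 i)ᶜ) := by
      intro c _
      obtain ⟨d, hd, hcd⟩ := hcon c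
      exact Finset.mem_biUnion.2 ⟨⟨d, hd⟩, Finset.mem_attach _ _, Finset.mem_compl.2 hcd⟩
    have hle : k ≤ s * (s + 1) := by
      calc k = (Finset.univ : Finset (Fin k)).card := by simp
        _ ≤ (D'.attach.biUnion (fun d => (C d.1 d.2 i)ᶜ)).card := Finset.card_le_card hcover
        _ ≤ ∑ d ∈ D'.attach, ((C d.1 d.2 i)ᶜ).card := Finset.card_biUnion_le
        _ ≤ ∑ _d ∈ D'.attach, s := by
            refine Finset.sum_le_sum fun d _ => ?_
            have h1 := hC1 d.1 d.2 i
            have h2 : ((C d.1 d.2 i)ᶜ).card = k - (C d.1 d.2 i).card := by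
              rw [Finset.card_compl, Fintype.card_fin]
            omega
        _ = (s + 1) * s := by
            rw [Finset.sum_const, Finset.card_attach, hD'card, smul_eq_mul]
        _ = s * (s + 1) := mul_comm _ _
    omega
  choose x hx using hcommon
  -- all s+1 colors lie in Fr x
  have hsub : D' ⊆ Fr x := fun d hd => hC2 d hd x (fun i => hx i d hd)
  have := Finset.card_le_card hsub
  have := hcard x
  omega
end

section
/- For every tree T and every s ≥ 1, the s-guess hat guessing number satisfies μ_s(T) ≤ s(s+1): if the number of colors k exceeds s(s+1), then for any family of s-guessing strategies on T there is a coloring for which no vertex's guess-set contains its own color. -/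
open SimpleGraph Finset

section HatAux
variable {V : Type*} [Fintype V] [DecidableEq V]

noncomputable def hatBad (k : ℕ) (F : V → (V → Fin k) → Finset (Fin k))
    (par : V → V) (kids : V → Finset V) (dpt : V → ℕ)
    (hkd : ∀ v x, x ∈ kids v → dpt x = dpt v + 1)
    (hd : ∀ v, dpt v < Fintype.card V) (v : V) (a : Fin k) : Finset (Fin k) :=
  @Finset.filter (Fin k)
    (fun t => ∀ g : V → Fin k, g (par v) = a →
      (∀ x, ∀ hx : x ∈ kids v, g x ∉ hatBad k F par kids dpt hkd hd x t) → t ∈ F v g)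
    (Classical.decPred _) Finset.univ
termination_by Fintype.card V - dpt v
decreasing_by
  all_goals
    have h1 := hkd v x hx
    have h2 := hd v
    omega

lemma hatBad_mem (k : ℕ) (F : V → (V → Fin k) → Finset (Fin k))
    (par : V → V) (kids : V → Finset V) (dpt : V → ℕ)
    (hkd : ∀ v x, x ∈ kids v → dpt x = dpt v + 1)
    (hd : ∀ v, dpt v < Fintype.card V) (v : V) (a t : Fin k) :
    t ∈ hatBad k F par kids dpt hkd hd v a ↔
      (∀ g : V → Fin k, g (par v) = a →
        (∀ x, x ∈ kids v → g x ∉ hatBad k F par kids dpt hkd hd x t) → t ∈ F v g) := by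
  conv_lhs => rw [hatBad]
  simp [Finset.mem_filter]

lemma hatBad_card (k s : ℕ) (F : V → (V → Fin k) → Finset (Fin k))
    (par : V → V) (kids : V → Finset V) (dpt : V → ℕ)
    (hkd : ∀ v x, x ∈ kids v → dpt x = dpt v + 1)
    (hd : ∀ v, dpt v < Fintype.card V)
    (hcard : ∀ v g, (F v g).card ≤ s)
    (hks : s * (s + 1) < k)
    (hpk : ∀ v, par v ∉ kids v) :
    ∀ v a, (hatBad k F par kids dpt hkd hd v a).card ≤ s := by
  have hk0 : 0 < k := by nlinarith
  suffices H : ∀ n v a, Fintype.card V - dpt v ≤ n →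
      (hatBad k F par kids dpt hkd hd v a).card ≤ s by
    intro v a
    exact H (Fintype.card V) v a (by omega)
  intro n
  induction n with
  | zero => intro v a h; have := hd v; omega
  | succ n ih =>
    classical
    intro v a hm
    by_contra hlt
    push_neg at hlt
    obtain ⟨Y, hYsub, hYcard⟩ :=
      Finset.exists_subset_card_eq (n := s + 1)
        (s := hatBad k F par kids dpt hkd hd v a) (by omega)
    -- for each kid, find a color avoiding all bad sets of elements of Y
    have hUx : ∀ x ∈ kids v, ∃ b : Fin k, ∀ t ∈ Y,
        b ∉ hatBad k F par kids dpt hkd hd x t := by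
      intro x hx
      set U : Finset (Fin k) := Y.biUnion (fun t => hatBad k F par kids dpt hkd hd x t) with hU
      have hcardU : U.card ≤ (s + 1) * s := by
        calc U.card ≤ ∑ t ∈ Y, (hatBad k F par kids dpt hkd hd x t).card :=
              Finset.card_biUnion_le
        _ ≤ Y.card * s := by
              apply Finset.sum_le_card_nsmul
              intro t _
              apply ih
              have := hkd v x hx
              omega
        _ = (s + 1) * s := by rw [hYcard]
      have hUk : U.card < k := by nlinarith
      have : U ≠ Finset.univ := by
        intro he
        rw [he, Finset.card_univ, Fintype.card_fin] at hUk
        omega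
      obtain ⟨b, hb⟩ : ∃ b, b ∉ U := by
        by_contra hall
        push_neg at hall
        exact this (Finset.eq_univ_iff_forall.mpr hall)
      exact ⟨b, fun t ht hmem => hb (Finset.mem_biUnion.mpr ⟨t, ht, hmem⟩)⟩
    choose c hc using hUx
    set g₀ : V → Fin k := fun u =>
      if h1 : u = par v then a else if h2 : u ∈ kids v then c u h2 else ⟨0, hk0⟩ with hg₀
    have hg₀p : g₀ (par v) = a := by simp [hg₀]
    have hg₀x : ∀ x (hx : x ∈ kids v), g₀ x = c x hx := by
      intro x hx
      have hne : x ≠ par v := by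
        intro e; exact hpk v (e ▸ hx)
      simp [hg₀, hne, hx]
    have hsub : Y ⊆ F v g₀ := by
      intro t ht
      have hmem := hYsub ht
      rw [hatBad_mem] at hmem
      exact hmem g₀ hg₀p (fun x hx => by rw [hg₀x x hx]; exact hc x hx t ht)
    have := Finset.card_le_card hsub
    have := hcard v g₀
    omega



noncomputable def reali (k : ℕ) (r : V) (par : V → V) (dpt : V → ℕ)
    (wit : V → Fin k → Fin k → (V → Fin k)) (c0 : Fin k)
    (h1 : ∀ v, v ≠ r → dpt (par v) < dpt v)
    (h2 : ∀ v, v ≠ r → dpt (par (par v)) < dpt v) : V → Fin k := fun v =>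
  if h : v = r then c0
  else wit (par v) (reali k r par dpt wit c0 h1 h2 (par (par v)))
         (reali k r par dpt wit c0 h1 h2 (par v)) v
termination_by v => dpt v
decreasing_by
  all_goals rename_i v
  · exact h2 v h
  · exact h1 v h

section TreeFacts
variable {T : SimpleGraph V} {r : V}

lemma exists_shortest_path (hT : T.IsTree) (r v : V) :
    ∃ p : T.Walk r v, p.IsPath ∧ p.length = T.dist r v := by
  obtain ⟨w, hw⟩ := (hT.isConnected.preconnected r v).exists_walk_length_eq_dist
  refine ⟨w.bypass, SimpleGraph.Walk.bypass_isPath w, le_antisymm ?_ ?_⟩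
  · calc w.bypass.length ≤ w.length := SimpleGraph.Walk.length_bypass_le w
    _ = T.dist r v := hw
  · exact SimpleGraph.dist_le _

lemma dist_le_of_mem_support {p : T.Walk r v} (hx : x ∈ p.support) :
    T.dist r x ≤ p.length :=
  le_trans (SimpleGraph.dist_le _) (SimpleGraph.Walk.length_takeUntil_le p hx)

lemma dist_lt_card (hT : T.IsTree) (r v : V) : T.dist r v < Fintype.card V := by
  obtain ⟨p, hp, hl⟩ := exists_shortest_path hT r v
  rw [← hl]
  exact hp.length_lt

lemma exists_parent (hT : T.IsTree) (r v : V) (hv : v ≠ r) :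
    ∃ u, T.Adj u v ∧ T.dist r u + 1 = T.dist r v := by
  obtain ⟨w, hw⟩ := (hT.isConnected.preconnected r v).exists_walk_length_eq_dist
  obtain ⟨u, hadj, q, hq⟩ := SimpleGraph.Walk.exists_eq_cons_of_ne hv w.reverse
  have hlen : q.length + 1 = T.dist r v := by
    have := congrArg SimpleGraph.Walk.length hq
    simpa [hw] using this.symm
  have h1 : T.dist r u ≤ q.length := by
    have := SimpleGraph.dist_le q.reverse
    simpa using this
  have h2 : T.dist r v ≤ T.dist r u + 1 := by
    obtain ⟨w', hw'1, hw'2⟩ := exists_shortest_path hT r u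
    have := SimpleGraph.dist_le (w'.concat hadj.symm)
    simpa [SimpleGraph.Walk.length_concat, hw'2] using this
  exact ⟨u, hadj.symm, by omega⟩

lemma concat_isPath {p : T.Walk r u} (hp : p.IsPath) (h : T.Adj u v)
    (hv : v ∉ p.support) : (p.concat h).IsPath := by
  rw [← SimpleGraph.Walk.isPath_reverse_iff, SimpleGraph.Walk.reverse_concat]
  rw [SimpleGraph.Walk.cons_isPath_iff]
  exact ⟨hp.reverse, by simpa using hv⟩

lemma adj_dist_ne (hT : T.IsTree) (r : V) (h : T.Adj u v) :
    T.dist r u ≠ T.dist r v := by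
  intro he
  obtain ⟨p, hp, hl⟩ := exists_shortest_path hT r u
  by_cases hv : v ∈ p.support
  · -- then v = u, contradiction with adjacency
    have h1 : T.dist r v ≤ (p.takeUntil v hv).length := SimpleGraph.dist_le _
    have h2 := congrArg SimpleGraph.Walk.length (SimpleGraph.Walk.take_spec p hv)
    rw [SimpleGraph.Walk.length_append] at h2
    have h3 : (p.dropUntil v hv).length = 0 := by omega
    exact h.ne (SimpleGraph.Walk.eq_of_length_eq_zero h3).symm
  · obtain ⟨p', hp', hl'⟩ := exists_shortest_path hT r v
    have hQ : (p.concat h).IsPath := concat_isPath hp h hv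
    have := (hT.existsUnique_path r v).unique hQ hp'
    have := congrArg SimpleGraph.Walk.length this
    rw [SimpleGraph.Walk.length_concat] at this
    omega

lemma parent_unique (hT : T.IsTree) (r : V) {u1 u2 v : V}
    (h1 : T.Adj u1 v) (h2 : T.Adj u2 v)
    (hd1 : T.dist r u1 + 1 = T.dist r v) (hd2 : T.dist r u2 + 1 = T.dist r v) :
    u1 = u2 := by
  obtain ⟨p1, hp1, hl1⟩ := exists_shortest_path hT r u1
  obtain ⟨p2, hp2, hl2⟩ := exists_shortest_path hT r u2
  have hv1 : v ∉ p1.support := by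
    intro hv
    have := dist_le_of_mem_support (p := p1) hv
    omega
  have hv2 : v ∉ p2.support := by
    intro hv
    have := dist_le_of_mem_support (p := p2) hv
    omega
  have hQ1 : (p1.concat h1).IsPath := concat_isPath hp1 h1 hv1
  have hQ2 : (p2.concat h2).IsPath := concat_isPath hp2 h2 hv2
  have heq := (hT.existsUnique_path r v).unique hQ1 hQ2
  have := congrArg (fun q : T.Walk r v => q.reverse.getVert 1) heq
  simpa [SimpleGraph.Walk.reverse_concat, SimpleGraph.Walk.getVert_cons_succ,
    SimpleGraph.Walk.getVert_zero] using this

lemma adj_dist_le (hT : T.IsTree) (r : V) (h : T.Adj u v) :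
    T.dist r v ≤ T.dist r u + 1 := by
  obtain ⟨p, hp, hl⟩ := exists_shortest_path hT r u
  have := SimpleGraph.dist_le (p.concat h)
  simpa [SimpleGraph.Walk.length_concat, hl] using this

end TreeFacts
end HatAux

/-- For every tree `T` and every `s ≥ 1`, the `s`-guess hat guessing
number satisfies `μ_s(T) ≤ s(s+1)`: if the number of colors `k` exceeds `s(s+1)`, then
for any family of `s`-guessing strategies on `T` there is a coloring for which no
vertex's guess-set contains its own color. -/
theorem tree_s_guess_bound {V : Type*} [Fintype V]
    (T : SimpleGraph V) (hT : T.IsTree) (s k : ℕ) (hs : 1 ≤ s)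
    (hk : s * (s + 1) < k)
    (F : V → (V → Fin k) → Finset (Fin k))
    (hcard : ∀ v : V, ∀ x : V → Fin k, (F v x).card ≤ s)
    (hF : ∀ v : V, ∀ x y : V → Fin k, (∀ u : V, T.Adj v u → x u = y u) → F v x = F v y) :
    ∃ f : V → Fin k, ∀ v : V, f v ∉ F v f := by
  classical
  have hk0 : 0 < k := lt_of_le_of_lt (Nat.zero_le _) hk
  have hsk : s < k := by
    have : s ≤ s * (s + 1) := Nat.le_mul_of_pos_right _ (by omega)
    omega
  obtain ⟨r⟩ := hT.isConnected.nonempty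
  -- the parent function
  have hex : ∀ v : V, ∃ u : V,
      (v ≠ r → T.Adj u v ∧ T.dist r u + 1 = T.dist r v) ∧ (v = r → u = r) := by
    intro v
    by_cases h : v = r
    · exact ⟨r, fun h' => absurd h h', fun _ => rfl⟩
    · obtain ⟨u, h1, h2⟩ := exists_parent hT r v h
      exact ⟨u, fun _ => ⟨h1, h2⟩, fun h' => absurd h' h⟩
  choose par hpar hparr using hex
  have hparr' : par r = r := hparr r rfl
  have hdr : T.dist r r = 0 := SimpleGraph.dist_self
  have hdpos : ∀ v, v ≠ r → 0 < T.dist r v := by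
    intro v hv
    have := (hpar v hv).2
    omega
  set kids : V → Finset V :=
    fun v => Finset.univ.filter (fun x => x ≠ r ∧ par x = v) with hkids_def
  have hmem_kids : ∀ v x, x ∈ kids v ↔ (x ≠ r ∧ par x = v) := by
    intro v x; simp [hkids_def]
  have hkd : ∀ v x, x ∈ kids v → T.dist r x = T.dist r v + 1 := by
    intro v x hx
    rw [hmem_kids] at hx
    obtain ⟨hx1, hx2⟩ := hx
    have h2 := (hpar x hx1).2
    rw [hx2] at h2
    omega
  have hd4 : ∀ v, T.dist r v < Fintype.card V := fun v => dist_lt_card hT r v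
  have hpk : ∀ v, par v ∉ kids v := by
    intro v hv
    rw [hmem_kids] at hv
    obtain ⟨h1, h2⟩ := hv
    by_cases hvr : v = r
    · rw [hvr] at h1
      exact h1 hparr'
    · have e1 := (hpar v hvr).2
      have e2 := (hpar (par v) h1).2
      rw [h2] at e2
      omega
  set Bad := hatBad k F par kids (T.dist r) hkd hd4 with hBad_def
  have hBadCard : ∀ v a, (Bad v a).card ≤ s :=
    hatBad_card k s F par kids (T.dist r) hkd hd4 hcard hk hpk
  -- the bad set at the root does not depend on the phantom parent color
  have hroot_indep : ∀ a a' : Fin k, Bad r a = Bad r a' := by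
    suffices h : ∀ a a' t, t ∈ Bad r a → t ∈ Bad r a' by
      intro a a'; ext t; exact ⟨h a a' t, h a' a t⟩
    intro a a' t ht
    rw [hBad_def, hatBad_mem] at ht ⊢
    intro g hg hkid
    have hg' : Function.update g r a (par r) = a := by rw [hparr']; simp
    have hkid' : ∀ x, x ∈ kids r →
        Function.update g r a x ∉ hatBad k F par kids (T.dist r) hkd hd4 x t := by
      intro x hx
      have hxr : x ≠ r := ((hmem_kids r x).1 hx).1
      rw [Function.update_of_ne hxr]
      exact hkid x hx
    have hmem := ht (Function.update g r a) hg' hkid'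
    have heq : F r (Function.update g r a) = F r g := by
      apply hF
      intro u hu
      exact Function.update_of_ne (fun e => (T.ne_of_adj hu) e.symm) _ _
    rwa [heq] at hmem
  -- choice of the root color
  obtain ⟨c0, hc0⟩ : ∃ c0 : Fin k, c0 ∉ Bad r ⟨0, hk0⟩ := by
    by_contra hall
    push_neg at hall
    have huniv : (Bad r ⟨0, hk0⟩) = Finset.univ := Finset.eq_univ_iff_forall.mpr hall
    have h1 := hBadCard r ⟨0, hk0⟩
    rw [huniv, Finset.card_univ, Fintype.card_fin] at h1
    omega
  have hc0' : ∀ a, c0 ∉ Bad r a := fun a => by rw [hroot_indep a ⟨0, hk0⟩]; exact hc0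
  -- witnesses
  have hwitex : ∀ u (b c : Fin k), ∃ g : V → Fin k,
      c ∉ Bad u b → (g (par u) = b ∧ (∀ x ∈ kids u, g x ∉ Bad x c) ∧ c ∉ F u g) := by
    intro u b c
    by_cases hc : c ∈ Bad u b
    · exact ⟨fun _ => c0, fun hn => absurd hc hn⟩
    · rw [hBad_def, hatBad_mem] at hc
      push_neg at hc
      obtain ⟨g, hg1, hg2, hg3⟩ := hc
      exact ⟨g, fun _ => ⟨hg1, hg2, hg3⟩⟩
  choose wit hwit using hwitex
  have hh1 : ∀ v, v ≠ r → T.dist r (par v) < T.dist r v := by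
    intro v hv; have := (hpar v hv).2; omega
  have hh2 : ∀ v, v ≠ r → T.dist r (par (par v)) < T.dist r v := by
    intro v hv
    by_cases hp : par v = r
    · rw [hp, hparr']
      have := hdpos v hv
      omega
    · have e1 := hh1 v hv
      have e2 := hh1 (par v) hp
      omega
  have hfr : reali k r par (T.dist r) wit c0 hh1 hh2 r = c0 := by
    rw [reali]; simp
  have hfv : ∀ v, v ≠ r → reali k r par (T.dist r) wit c0 hh1 hh2 v =
      wit (par v) (reali k r par (T.dist r) wit c0 hh1 hh2 (par (par v)))
        (reali k r par (T.dist r) wit c0 hh1 hh2 (par v)) v := by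
    intro v hv
    conv_lhs => rw [reali]
    exact dif_neg hv
  set f := reali k r par (T.dist r) wit c0 hh1 hh2 with hf_def
  -- invariant: every non-root vertex avoids its bad set
  have hinv : ∀ v, v ≠ r → f v ∉ Bad v (f (par v)) := by
    suffices H : ∀ n v, T.dist r v ≤ n → v ≠ r → f v ∉ Bad v (f (par v)) by
      intro v hv; exact H (T.dist r v) v le_rfl hv
    intro n
    induction n with
    | zero => intro v h hv; have := hdpos v hv; omega
    | succ n ih =>
      intro v hdv hv
      rw [hfv v hv]
      by_cases hp : par v = r
      · rw [hp, hparr', hfr]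
        have hprops := hwit r c0 c0 (hc0' c0)
        have hvk : v ∈ kids r := by rw [hmem_kids]; exact ⟨hv, hp⟩
        exact hprops.2.1 v hvk
      · have hpre : f (par v) ∉ Bad (par v) (f (par (par v))) :=
          ih (par v) (by have := hh1 v hv; omega) hp
        have hprops := hwit (par v) (f (par (par v))) (f (par v)) hpre
        have hvk : v ∈ kids (par v) := by rw [hmem_kids]; exact ⟨hv, rfl⟩
        exact hprops.2.1 v hvk
  -- conclusion
  refine ⟨f, fun v => ?_⟩
  have hpre : f v ∉ Bad v (f (par v)) := by
    by_cases hv : v = r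
    · rw [hv, hfr]
      exact hc0' (f (par r))
    · exact hinv v hv
  have hprops := hwit v (f (par v)) (f v) hpre
  have heq : F v f = F v (wit v (f (par v)) (f v)) := by
    apply hF
    intro u hu
    have hb1 : T.dist r u ≤ T.dist r v + 1 := adj_dist_le hT r hu
    have hb2 : T.dist r v ≤ T.dist r u + 1 := adj_dist_le hT r hu.symm
    have hne : T.dist r v ≠ T.dist r u := adj_dist_ne hT r hu
    rcases Nat.lt_or_ge (T.dist r u) (T.dist r v) with hlt | hge
    · -- u is the parent of v
      have hvr : v ≠ r := by
        intro e; rw [e, hdr] at hlt; omega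
      have hde : T.dist r u + 1 = T.dist r v := by omega
      have hu_par : u = par v :=
        parent_unique hT r hu.symm (hpar v hvr).1 hde (hpar v hvr).2
      rw [hu_par, hprops.1]
    · -- v is the parent of u
      have hde : T.dist r v + 1 = T.dist r u := by omega
      have hur : u ≠ r := by
        intro e; rw [e, hdr] at hde; omega
      have hpu : par u = v :=
        parent_unique hT r (hpar u hur).1 hu (hpar u hur).2 hde
      rw [hfv u hur, hpu]
  rw [heq]
  exact hprops.2.2
end

section
/- For every graph G, the full subdivision S of G (obtained by subdividing every edge exactly once) satisfies μ_s(S) ≤ s(s+1)² for all s ≥ 1; in particular μ(S) ≤ 4. -/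
/-- The `s`-guess hat guessing number `μ_s(G)`. -/
noncomputable def sHatGuessingNumber {V : Type*} [Fintype V] (G : SimpleGraph V)
    (s : ℕ) : ℕ :=
  sSup {k : ℕ | ∃ F : V → (V → Fin k) → Finset (Fin k),
    (∀ v : V, ∀ x : V → Fin k, (F v x).card ≤ s) ∧
    (∀ v : V, ∀ x y : V → Fin k, (∀ u : V, G.Adj v u → x u = y u) → F v x = F v y) ∧
    (∀ x : V → Fin k, ∃ v : V, x v ∈ F v x)}

/-- The full subdivision of `G`: vertex set `V(G) ⊕ E(G)`, an original vertex `v` being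
adjacent to an edge-vertex `e` iff `v` is an endpoint of `e`. -/
def fullSubdivision {V : Type*} (G : SimpleGraph V) :
    SimpleGraph (V ⊕ G.edgeSet) :=
  SimpleGraph.fromRel (fun x y =>
    match x, y with
    | Sum.inl v, Sum.inr e => v ∈ (e : Sym2 V)
    | _, _ => False)

/-- For every graph `G`, the full subdivision `S` of `G` satisfies
`μ_s(S) ≤ s(s+1)²` for all `s ≥ 1`; in particular `μ(S) ≤ 4`. -/
theorem s_hat_guessing_full_subdivision {V : Type*} [Fintype V] [DecidableEq V]
    (G : SimpleGraph V) [DecidableRel G.Adj] :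
    (∀ s : ℕ, 1 ≤ s → sHatGuessingNumber (fullSubdivision G) s ≤ s * (s + 1) ^ 2) ∧
    sHatGuessingNumber (fullSubdivision G) 1 ≤ 4 := by
  classical
  have main : ∀ s : ℕ, 1 ≤ s → sHatGuessingNumber (fullSubdivision G) s ≤ s * (s + 1) ^ 2 := by
    intro s hs
    apply csSup_le'
    rintro k ⟨F, hcard, hadj, hwin⟩
    by_contra hk
    push_neg at hk
    -- hk : s * (s + 1) ^ 2 < k
    have hk1 : s + 1 ≤ k := by nlinarith
    -- embed the small palette
    let emb : Fin (s + 1) → Fin k := fun a => ⟨a.1, lt_of_lt_of_le a.2 hk1⟩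
    have embinj : Function.Injective emb := by
      intro a b h
      have h' := congrArg Fin.val h
      exact Fin.ext h'
    -- adjacency facts
    have adj_lr : ∀ (v : V) (e : G.edgeSet),
        (fullSubdivision G).Adj (Sum.inl v) (Sum.inr e) ↔ v ∈ (e : Sym2 V) := by
      intro v e; simp [fullSubdivision, SimpleGraph.fromRel_adj]
    have adj_rl : ∀ (e : G.edgeSet) (v : V),
        (fullSubdivision G).Adj (Sum.inr e) (Sum.inl v) ↔ v ∈ (e : Sym2 V) := by
      intro e v; simp [fullSubdivision, SimpleGraph.fromRel_adj]
    have adj_ll : ∀ (v u : V), ¬ (fullSubdivision G).Adj (Sum.inl v) (Sum.inl u) := by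
      intro v u; simp [fullSubdivision, SimpleGraph.fromRel_adj]
    have adj_rr : ∀ (e f : G.edgeSet), ¬ (fullSubdivision G).Adj (Sum.inr e) (Sum.inr f) := by
      intro e f; simp [fullSubdivision, SimpleGraph.fromRel_adj]
    -- choose an ordered pair of endpoints for each edge
    have hrep : ∀ e : G.edgeSet, ∃ p : V × V, (e : Sym2 V) = Sym2.mk p.1 p.2 := by
      intro e
      induction (e : Sym2 V) using Sym2.inductionOn with
      | hf a b => exact ⟨(a, b), rfl⟩
    choose pr hpr using hrep
    -- the base assignments used to collect all possible guesses of an edge-vertex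
    let base : G.edgeSet → Fin (s + 1) × Fin (s + 1) → (V ⊕ G.edgeSet) → Fin k :=
      fun e p w => match w with
        | Sum.inl u => if u = (pr e).1 then emb p.1 else if u = (pr e).2 then emb p.2 else emb 0
        | Sum.inr _ => emb 0
    let Bad : G.edgeSet → Finset (Fin k) :=
      fun e => Finset.univ.biUnion
        (fun p : Fin (s + 1) × Fin (s + 1) => F (Sum.inr e) (base e p))
    have hBadcard : ∀ e, (Bad e).card ≤ s * (s + 1) ^ 2 := by
      intro e
      calc (Bad e).card
          ≤ ∑ p : Fin (s + 1) × Fin (s + 1), (F (Sum.inr e) (base e p)).card :=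
            Finset.card_biUnion_le
        _ ≤ ∑ _p : Fin (s + 1) × Fin (s + 1), s :=
            Finset.sum_le_sum (fun p _ => hcard _ _)
        _ = (s + 1) * (s + 1) * s := by
            simp [Finset.sum_const, Finset.card_univ]
        _ ≤ s * (s + 1) ^ 2 := le_of_eq (by ring)
    -- choose a color for each edge-vertex outside all its possible guesses
    have hc : ∀ e, ∃ col : Fin k, col ∉ Bad e := by
      intro e
      by_contra h
      push_neg at h
      have huniv : Bad e = Finset.univ := Finset.eq_univ_iff_forall.mpr h
      have h2 := hBadcard e
      rw [huniv, Finset.card_univ, Fintype.card_fin] at h2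
      omega
    choose c hcnot using hc
    -- the assignment with edge-vertex colors fixed, original vertices at a default color
    let y0 : (V ⊕ G.edgeSet) → Fin k := fun w => match w with
      | Sum.inl _ => emb 0
      | Sum.inr e => c e
    -- choose a palette color for each original vertex outside its (determined) guess set
    have hg : ∀ v : V, ∃ a : Fin (s + 1), emb a ∉ F (Sum.inl v) y0 := by
      intro v
      by_contra h
      push_neg at h
      have hsub : Finset.univ.image emb ⊆ F (Sum.inl v) y0 := by
        intro z hz
        rw [Finset.mem_image] at hz
        obtain ⟨a, -, rfl⟩ := hz
        exact h a
      have h1 : (Finset.univ.image emb).card = s + 1 := by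
        rw [Finset.card_image_of_injective _ embinj, Finset.card_univ, Fintype.card_fin]
      have h2 := Finset.card_le_card hsub
      have h3 := hcard (Sum.inl v) y0
      omega
    choose g hgnot using hg
    -- the final adversarial assignment
    let x : (V ⊕ G.edgeSet) → Fin k := fun w => match w with
      | Sum.inl v => emb (g v)
      | Sum.inr e => c e
    obtain ⟨w, hw⟩ := hwin x
    cases w with
    | inl v =>
      have heq : F (Sum.inl v) x = F (Sum.inl v) y0 := by
        apply hadj
        intro u hu
        cases u with
        | inl u' => exact absurd hu (adj_ll v u')
        | inr e => rfl
      rw [heq] at hw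
      exact hgnot v hw
    | inr e =>
      have heq : F (Sum.inr e) x = F (Sum.inr e) (base e (g (pr e).1, g (pr e).2)) := by
        apply hadj
        intro u hu
        cases u with
        | inl u' =>
          have hmem : u' ∈ (e : Sym2 V) := (adj_rl e u').mp hu
          have hor : u' = (pr e).1 ∨ u' = (pr e).2 := by
            rw [hpr e] at hmem
            exact Sym2.mem_iff.mp hmem
          show emb (g u') = base e (g (pr e).1, g (pr e).2) (Sum.inl u')
          rcases hor with h1 | h2
          · subst h1; simp [base]
          · by_cases h1 : u' = (pr e).1
            · subst h1; simp [base]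
            · subst h2; simp [base, if_neg h1]
        | inr f => exact absurd hu (adj_rr e f)
      rw [heq] at hw
      exact hcnot e (Finset.mem_biUnion.mpr ⟨_, Finset.mem_univ _, hw⟩)
  refine ⟨main, ?_⟩
  have h := main 1 le_rfl
  norm_num at h
  exact h
end

section
/- For every tree T, the color-sequence (2, 3, 3, ..., 3) is losing: if one fixed vertex has 2 available colors and every other vertex has 3 available colors, then for every strategy family on T there exists a coloring for which every vertex guesses wrong. -/
open SimpleGraph

section Aux
variable {V : Type*} [DecidableEq V] {T : SimpleGraph V}

lemma tth_split (hc : T.Connected) {x y z : V} (p : T.Walk x y)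
    (hp : p.length = T.dist x y) (hz : z ∈ p.support) :
    T.dist x z + T.dist z y = T.dist x y := by
  have h1 : T.dist x z ≤ (p.takeUntil z hz).length := dist_le _
  have h2 : T.dist z y ≤ (p.dropUntil z hz).length := dist_le _
  have h3 : (p.takeUntil z hz).length + (p.dropUntil z hz).length = p.length := by
    rw [← SimpleGraph.Walk.length_append, SimpleGraph.Walk.take_spec]
  have h4 := hc.dist_triangle (u := x) (v := z) (w := y)
  omega

lemma tth_unique (hT : T.IsTree) {r u c₁ c₂ : V}
    (h₁ : T.dist r c₁ + T.dist c₁ u = T.dist r u)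
    (h₂ : T.dist r c₂ + T.dist c₂ u = T.dist r u)
    (hd : T.dist r c₁ = T.dist r c₂) : c₁ = c₂ := by
  have hc := hT.isConnected
  obtain ⟨p₁, hp₁⟩ := hc.exists_walk_length_eq_dist r c₁
  obtain ⟨q₁, hq₁⟩ := hc.exists_walk_length_eq_dist c₁ u
  obtain ⟨p₂, hp₂⟩ := hc.exists_walk_length_eq_dist r c₂
  obtain ⟨q₂, hq₂⟩ := hc.exists_walk_length_eq_dist c₂ u
  have hw₁ : (p₁.append q₁).IsPath := by
    apply SimpleGraph.Walk.isPath_of_length_eq_dist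
    rw [SimpleGraph.Walk.length_append]; omega
  have hw₂ : (p₂.append q₂).IsPath := by
    apply SimpleGraph.Walk.isPath_of_length_eq_dist
    rw [SimpleGraph.Walk.length_append]; omega
  obtain ⟨P, _, hPU⟩ := hT.existsUnique_path r u
  have he : p₁.append q₁ = p₂.append q₂ := (hPU _ hw₁).trans (hPU _ hw₂).symm
  have hmem : c₂ ∈ (p₁.append q₁).support := by
    rw [he, SimpleGraph.Walk.mem_support_append_iff]
    exact Or.inl (SimpleGraph.Walk.end_mem_support _)
  rcases (SimpleGraph.Walk.mem_support_append_iff _ _).mp hmem with h | h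
  · have hs := tth_split hc p₁ (by rw [hp₁]) h
    have hz : T.dist c₂ c₁ = 0 := by omega
    exact ((hc.dist_eq_zero_iff).mp hz).symm
  · have hs := tth_split hc q₁ (by rw [hq₁]) h
    have hz : T.dist c₁ c₂ = 0 := by omega
    exact (hc.dist_eq_zero_iff).mp hz

lemma tth_adj_dist (hT : T.IsTree) (r : V) {x y : V} (h : T.Adj x y) :
    T.dist r y = T.dist r x + 1 ∨ T.dist r x = T.dist r y + 1 := by
  have hc := hT.isConnected
  have h1 : T.dist x y = 1 := dist_eq_one_iff_adj.mpr h
  have h1' : T.dist y x = 1 := by rwa [dist_comm] at h1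
  have t1 := hc.dist_triangle (u := r) (v := x) (w := y)
  have t2 := hc.dist_triangle (u := r) (v := y) (w := x)
  by_contra hcon
  push_neg at hcon
  have heq : T.dist r x = T.dist r y := by omega
  obtain ⟨p, hp⟩ := hc.exists_walk_length_eq_dist r x
  have hy : y ∉ p.support := by
    intro hmem
    have := tth_split hc p hp hmem
    omega
  have hpath : (p.concat h).IsPath := by
    rw [SimpleGraph.Walk.isPath_def, SimpleGraph.Walk.support_concat,
      List.nodup_append]
    refine ⟨(SimpleGraph.Walk.isPath_of_length_eq_dist p hp).support_nodup, List.nodup_singleton _, ?_⟩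
    intro a ha b hb hab
    rw [List.mem_singleton] at hb
    subst hb
    subst hab
    exact hy ha
  obtain ⟨P, _, hPU⟩ := hT.existsUnique_path r y
  obtain ⟨q, hq, hql⟩ := hc.exists_path_of_dist r y
  have hqP : q = P := hPU _ hq
  have hcP : p.concat h = P := hPU _ hpath
  have : (p.concat h).length = q.length := by rw [hcP, hqP]
  rw [SimpleGraph.Walk.length_concat, hp, hql] at this
  omega

lemma tth_first_step (hc : T.Connected) {v u : V} (h : T.dist v u ≠ 0) :
    ∃ c, T.Adj v c ∧ T.dist c u + 1 = T.dist v u := by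
  obtain ⟨p, hp⟩ := hc.exists_walk_length_eq_dist v u
  cases p with
  | nil => rw [← hp] at h; simp at h
  | @cons _ c _ hadj rest =>
    refine ⟨c, hadj, ?_⟩
    have h1 : T.dist c u ≤ rest.length := dist_le rest
    have h2 : T.dist v c = 1 := dist_eq_one_iff_adj.mpr hadj
    have h3 := hc.dist_triangle (u := v) (v := c) (w := u)
    simp only [SimpleGraph.Walk.length_cons] at hp
    omega

end Aux


open SimpleGraph

section Aux
variable {V : Type*} [DecidableEq V] {T : SimpleGraph V}

lemma tth_pick {α : Type*} (Q₁ Q₂ : α → Prop) (z₀ z₁ z₂ : α)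
    (h01 : z₀ ≠ z₁) (h02 : z₀ ≠ z₂) (h12 : z₁ ≠ z₂)
    (H₁ : ∀ x y, x ≠ y → Q₁ x ∨ Q₁ y) (H₂ : ∀ x y, x ≠ y → Q₂ x ∨ Q₂ y) :
    ∃ z, Q₁ z ∧ Q₂ z := by
  have a01 := H₁ _ _ h01; have a02 := H₁ _ _ h02; have a12 := H₁ _ _ h12
  have b01 := H₂ _ _ h01; have b02 := H₂ _ _ h02; have b12 := H₂ _ _ h12
  by_contra hno; push_neg at hno
  have n0 := hno z₀; have n1 := hno z₁; have n2 := hno z₂; tauto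

end Aux

section Main
variable {V : Type*} [Fintype V] [DecidableEq V] {T : SimpleGraph V}

lemma tth_main (hT : T.IsTree) (r : V) (a : V → ℕ) (hpos : ∀ j, 0 < a j)
    (h3 : ∀ v, v ≠ r → 3 ≤ a v)
    (F : ∀ i : V, (∀ j : V, Fin (a j)) → Fin (a i))
    (hF : ∀ i : V, ∀ x y : ∀ j : V, Fin (a j),
      (∀ j : V, T.Adj i j → x j = y j) → F i x = F i y) :
    ∀ (k : ℕ) (v : V),
      (Finset.univ.filter (fun u => T.dist r u = T.dist r v + T.dist v u)).card ≤ k →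
      ∀ (env : ∀ j : V, Fin (a j)) (y₁ y₂ : Fin (a v)), y₁ ≠ y₂ →
      ∃ y : Fin (a v), (y = y₁ ∨ y = y₂) ∧ ∃ f : ∀ j : V, Fin (a j),
        (∀ x, ¬ (T.dist r x = T.dist r v + T.dist v x) → f x = env x) ∧ f v = y ∧
        ∀ i, T.dist r i = T.dist r v + T.dist v i → F i f ≠ f i := by
  have hc := hT.isConnected
  have hDself : ∀ w : V, T.dist r w = T.dist r w + T.dist w w := by
    intro w; simp [SimpleGraph.dist_self]
  intro k
  induction k with
  | zero =>
    intro v hcard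
    exfalso
    have : v ∈ Finset.univ.filter (fun u => T.dist r u = T.dist r v + T.dist v u) :=
      Finset.mem_filter.mpr ⟨Finset.mem_univ _, hDself v⟩
    have := Finset.card_pos.mpr ⟨v, this⟩
    omega
  | succ k IH =>
    intro v hcard env y₁ y₂ hne
    classical
    set S : Finset V := Finset.univ.filter
      (fun c => T.Adj v c ∧ T.dist r c = T.dist r v + 1) with hS
    have hmemS : ∀ c, c ∈ S ↔ T.Adj v c ∧ T.dist r c = T.dist r v + 1 := by
      intro c; simp [hS]
    -- descendants of children are descendants of v
    have hsub : ∀ c ∈ S, ∀ u, T.dist r u = T.dist r c + T.dist c u →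
        T.dist r u = T.dist r v + T.dist v u := by
      intro c hcS u hu
      obtain ⟨hadj, hdc⟩ := (hmemS c).mp hcS
      have h1 : T.dist v c = 1 := dist_eq_one_iff_adj.mpr hadj
      have t1 := hc.dist_triangle (u := r) (v := v) (w := u)
      have t2 := hc.dist_triangle (u := v) (v := c) (w := u)
      omega
    -- v is not a descendant of a child
    have hnotv : ∀ c ∈ S, ¬ (T.dist r v = T.dist r c + T.dist c v) := by
      intro c hcS hD
      obtain ⟨hadj, hdc⟩ := (hmemS c).mp hcS
      have h1 : T.dist c v = 1 := dist_eq_one_iff_adj.mpr hadj.symm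
      omega
    -- children are distinct from r
    have hcr : ∀ c ∈ S, c ≠ r := by
      intro c hcS hcr
      obtain ⟨hadj, hdc⟩ := (hmemS c).mp hcS
      rw [hcr] at hdc
      simp [SimpleGraph.dist_self] at hdc
    -- descendant sets of distinct children are disjoint
    have hdisj : ∀ c₁ ∈ S, ∀ c₂ ∈ S, ∀ u,
        T.dist r u = T.dist r c₁ + T.dist c₁ u →
        T.dist r u = T.dist r c₂ + T.dist c₂ u → c₁ = c₂ := by
      intro c₁ h₁ c₂ h₂ u hu₁ hu₂
      obtain ⟨_, hd₁⟩ := (hmemS c₁).mp h₁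
      obtain ⟨_, hd₂⟩ := (hmemS c₂).mp h₂
      exact tth_unique hT (r := r) (u := u) (by omega) (by omega) (by omega)
    -- every proper descendant of v is a descendant of some child
    have hcover : ∀ u, T.dist r u = T.dist r v + T.dist v u → u ≠ v →
        ∃ c ∈ S, T.dist r u = T.dist r c + T.dist c u := by
      intro u hu hne'
      have hd0 : T.dist v u ≠ 0 := by
        intro h0
        exact hne' ((hc.dist_eq_zero_iff.mp h0).symm)
      obtain ⟨c, hadj, hcd⟩ := tth_first_step hc hd0
      have h1 : T.dist v c = 1 := dist_eq_one_iff_adj.mpr hadj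
      have t1 := hc.dist_triangle (u := r) (v := v) (w := c)
      have t2 := hc.dist_triangle (u := r) (v := c) (w := u)
      have hdc : T.dist r c = T.dist r v + 1 := by omega
      exact ⟨c, (hmemS c).mpr ⟨hadj, hdc⟩, by omega⟩
    -- neighbors of a descendant of a child c are descendants of c, except v
    have hB : ∀ c ∈ S, ∀ u, T.dist r u = T.dist r c + T.dist c u →
        ∀ x, T.Adj u x → ¬ (T.dist r x = T.dist r c + T.dist c x) → x = v := by
      intro c hcS u hu x hadj hnx
      obtain ⟨hadjvc, hdc⟩ := (hmemS c).mp hcS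
      have hone : T.dist u x = 1 := dist_eq_one_iff_adj.mpr hadj
      rcases tth_adj_dist hT r hadj with h | h
      · exfalso
        apply hnx
        have t1 := hc.dist_triangle (u := c) (v := u) (w := x)
        have t2 := hc.dist_triangle (u := r) (v := c) (w := x)
        omega
      · by_cases huc : u = c
        · subst huc
          have h1 : T.dist x u = 1 := by rwa [SimpleGraph.dist_comm] at hone
          have h2 : T.dist v u = 1 := dist_eq_one_iff_adj.mpr hadjvc
          exact tth_unique hT (r := r) (u := u) (by omega) (by omega) (by omega)
        · exfalso
          apply hnx
          have hdcu0 : T.dist u c ≠ 0 := by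
            rw [SimpleGraph.dist_comm]
            intro h0
            exact huc ((hc.dist_eq_zero_iff.mp h0).symm)
          obtain ⟨x', hadj', hx'⟩ := tth_first_step hc hdcu0
          have hone' : T.dist x' u = 1 := by
            rw [SimpleGraph.dist_comm]; exact dist_eq_one_iff_adj.mpr hadj'
          have hxu : T.dist x u = 1 := by rwa [SimpleGraph.dist_comm] at hone
          have hcomm1 : T.dist u c = T.dist c u := SimpleGraph.dist_comm
          have hcomm2 : T.dist x' c = T.dist c x' := SimpleGraph.dist_comm
          have hcomm3 : T.dist x c = T.dist c x := SimpleGraph.dist_comm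
          have hcu0 : 1 ≤ T.dist c u := by omega
          have t1 := hc.dist_triangle (u := r) (v := c) (w := x')
          have t2 := hc.dist_triangle (u := r) (v := x') (w := u)
          have hxx' : x = x' :=
            tth_unique hT (r := r) (u := u) (by omega) (by omega) (by omega)
          subst hxx'
          omega
    -- the descendant set of each child is strictly smaller
    have hcard_c : ∀ c ∈ S,
        (Finset.univ.filter (fun u => T.dist r u = T.dist r c + T.dist c u)).card ≤ k := by
      intro c hcS
      have hss : Finset.univ.filter (fun u => T.dist r u = T.dist r c + T.dist c u) ⊆
          (Finset.univ.filter (fun u => T.dist r u = T.dist r v + T.dist v u)).erase v := by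
        intro u hu
        have hu' := (Finset.mem_filter.mp hu).2
        refine Finset.mem_erase.mpr ⟨?_, Finset.mem_filter.mpr ⟨Finset.mem_univ _, hsub c hcS u hu'⟩⟩
        intro huv
        exact hnotv c hcS (huv ▸ hu')
      have h1 := Finset.card_le_card hss
      have h2 : v ∈ Finset.univ.filter (fun u => T.dist r u = T.dist r v + T.dist v u) :=
        Finset.mem_filter.mpr ⟨Finset.mem_univ _, hDself v⟩
      rw [Finset.card_erase_of_mem h2] at h1
      omega
    -- choose, for each child, a color that is safe for both environments
    set E₁ : ∀ j : V, Fin (a j) := Function.update env v y₁ with hE₁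
    set E₂ : ∀ j : V, Fin (a j) := Function.update env v y₂ with hE₂
    have hcommon : ∀ c : V, ∃ z : Fin (a c), c ∈ S →
        (∃ f : ∀ j : V, Fin (a j),
          (∀ x, ¬ (T.dist r x = T.dist r c + T.dist c x) → f x = E₁ x) ∧ f c = z ∧
          ∀ i, T.dist r i = T.dist r c + T.dist c i → F i f ≠ f i) ∧
        (∃ f : ∀ j : V, Fin (a j),
          (∀ x, ¬ (T.dist r x = T.dist r c + T.dist c x) → f x = E₂ x) ∧ f c = z ∧
          ∀ i, T.dist r i = T.dist r c + T.dist c i → F i f ≠ f i) := by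
      intro c
      by_cases hcS : c ∈ S
      · have h3c : 3 ≤ a c := h3 c (hcr c hcS)
        have hpair : ∀ (E : ∀ j : V, Fin (a j)) (x y : Fin (a c)), x ≠ y →
            (∃ f : ∀ j : V, Fin (a j),
              (∀ x', ¬ (T.dist r x' = T.dist r c + T.dist c x') → f x' = E x') ∧ f c = x ∧
              ∀ i, T.dist r i = T.dist r c + T.dist c i → F i f ≠ f i) ∨
            (∃ f : ∀ j : V, Fin (a j),
              (∀ x', ¬ (T.dist r x' = T.dist r c + T.dist c x') → f x' = E x') ∧ f c = y ∧
              ∀ i, T.dist r i = T.dist r c + T.dist c i → F i f ≠ f i) := by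
          intro E x y hxy
          obtain ⟨w, hw, f, hf1, hf2, hf3⟩ := IH c (hcard_c c hcS) E x y hxy
          rcases hw with rfl | rfl
          · exact Or.inl ⟨f, hf1, hf2, hf3⟩
          · exact Or.inr ⟨f, hf1, hf2, hf3⟩
        obtain ⟨z, hz₁, hz₂⟩ := tth_pick _ _
          (⟨0, by omega⟩ : Fin (a c)) ⟨1, by omega⟩ ⟨2, by omega⟩
          (by simp [Fin.ext_iff]) (by simp [Fin.ext_iff]) (by simp [Fin.ext_iff])
          (hpair E₁) (hpair E₂)
        exact ⟨z, fun _ => ⟨hz₁, hz₂⟩⟩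
      · exact ⟨⟨0, hpos c⟩, fun h => absurd h hcS⟩
    choose z hz using hcommon
    -- assembly of the colorings on unions of child subtrees
    have hassemble : ∀ (E : ∀ j : V, Fin (a j)),
        (∀ c ∈ S, (∃ f : ∀ j : V, Fin (a j),
          (∀ x, ¬ (T.dist r x = T.dist r c + T.dist c x) → f x = E x) ∧ f c = z c ∧
          ∀ i, T.dist r i = T.dist r c + T.dist c i → F i f ≠ f i)) →
        ∀ s : Finset V, s ⊆ S → ∃ f : ∀ j : V, Fin (a j),
          (∀ x, (∀ c ∈ s, ¬ (T.dist r x = T.dist r c + T.dist c x)) → f x = E x) ∧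
          (∀ c ∈ s, f c = z c) ∧
          (∀ c ∈ s, ∀ i, T.dist r i = T.dist r c + T.dist c i → F i f ≠ f i) := by
      intro E hQ s
      induction s using Finset.induction_on with
      | empty =>
        intro _
        exact ⟨E, fun x _ => rfl, fun c hc => absurd hc (Finset.notMem_empty c),
          fun c hc => absurd hc (Finset.notMem_empty c)⟩
      | @insert c s hcns IH2 =>
        intro hins
        have hcS : c ∈ S := hins (Finset.mem_insert_self c s)
        have hsS : s ⊆ S := fun x hx => hins (Finset.mem_insert_of_mem hx)
        obtain ⟨f₀, hf₀E, hf₀z, hf₀w⟩ := IH2 hsS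
        obtain ⟨f₁, hf₁E, hf₁z, hf₁w⟩ := hQ c hcS
        refine ⟨fun x => if h : T.dist r x = T.dist r c + T.dist c x then f₁ x else f₀ x,
          ?_, ?_, ?_⟩
        · intro x hx
          beta_reduce
          rw [dif_neg (hx c (Finset.mem_insert_self c s))]
          exact hf₀E x (fun c' hc' => hx c' (Finset.mem_insert_of_mem hc'))
        · intro c' hc'
          rcases Finset.mem_insert.mp hc' with rfl | hc's
          · beta_reduce
            rw [dif_pos (hDself _)]
            exact hf₁z
          · have hnD : ¬ (T.dist r c' = T.dist r c + T.dist c c') := by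
              intro hD
              exact hcns (hdisj c hcS c' (hsS hc's) c' hD (hDself c') ▸ hc's)
            beta_reduce
            rw [dif_neg hnD]
            exact hf₀z c' hc's
        · intro c' hc' i hDi
          rcases Finset.mem_insert.mp hc' with rfl | hc's
          · -- i is in the subtree of c (= c')
            have hkey : F i (fun x => if h : T.dist r x = T.dist r c' + T.dist c' x
                then f₁ x else f₀ x) = F i f₁ := by
              apply hF
              intro j hj
              by_cases hDj : T.dist r j = T.dist r c' + T.dist c' j
              · rw [dif_pos hDj]
              · rw [dif_neg hDj]
                have hjv : j = v := hB c' hcS i hDi j hj hDj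
                rw [hjv, hf₀E v (fun c'' hc'' => hnotv c'' (hsS hc'')),
                  hf₁E v (hnotv c' hcS)]
            rw [hkey]
            beta_reduce
            rw [dif_pos hDi]
            exact hf₁w i hDi
          · -- i is in the subtree of an earlier child c'
            have hnDi : ¬ (T.dist r i = T.dist r c + T.dist c i) := by
              intro hD
              exact hcns (hdisj c hcS c' (hsS hc's) i hD hDi ▸ hc's)
            have hkey : F i (fun x => if h : T.dist r x = T.dist r c + T.dist c x
                then f₁ x else f₀ x) = F i f₀ := by
              apply hF
              intro j hj
              by_cases hDj : T.dist r j = T.dist r c + T.dist c j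
              · exfalso
                have hiv : i = v := hB c hcS j hDj i hj.symm hnDi
                exact hnotv c' (hsS hc's) (hiv ▸ hDi)
              · rw [dif_neg hDj]
            rw [hkey]
            beta_reduce
            rw [dif_neg hnDi]
            exact hf₀w c' hc's i hDi
    obtain ⟨f₁, hf₁E, hf₁z, hf₁w⟩ :=
      hassemble E₁ (fun c hcS => (hz c hcS).1) S (Finset.Subset.refl S)
    obtain ⟨f₂, hf₂E, hf₂z, hf₂w⟩ :=
      hassemble E₂ (fun c hcS => (hz c hcS).2) S (Finset.Subset.refl S)
    -- the guess of v is the same for both colorings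
    have hnotdesc : ∀ j, T.dist r v = T.dist r j + 1 →
        ∀ c ∈ S, ¬ (T.dist r j = T.dist r c + T.dist c j) := by
      intro j hj c hcS hD
      obtain ⟨_, hdc⟩ := (hmemS c).mp hcS
      omega
    have hfree : ∀ j, T.Adj v j → (f₁ j = f₂ j) := by
      intro j hadj
      rcases tth_adj_dist hT r hadj with h | h
      · have hjS : j ∈ S := (hmemS j).mpr ⟨hadj, h⟩
        rw [hf₁z j hjS, hf₂z j hjS]
      · have hjd := hnotdesc j h
        have hjv : j ≠ v := fun hjv => by rw [hjv] at h; omega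
        rw [hf₁E j hjd, hf₂E j hjd, hE₁, hE₂,
          Function.update_of_ne hjv, Function.update_of_ne hjv]
    have hsame : F v f₁ = F v f₂ := hF v f₁ f₂ hfree
    -- the two assembled colorings satisfy everything except possibly at v
    have hprop : ∀ (y : Fin (a v)) (E : ∀ j : V, Fin (a j)) (f : ∀ j : V, Fin (a j)),
        E = Function.update env v y →
        (∀ x, (∀ c ∈ S, ¬ (T.dist r x = T.dist r c + T.dist c x)) → f x = E x) →
        (∀ c ∈ S, ∀ i, T.dist r i = T.dist r c + T.dist c i → F i f ≠ f i) →
        F v f ≠ y →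
        (∀ x, ¬ (T.dist r x = T.dist r v + T.dist v x) → f x = env x) ∧ f v = y ∧
        ∀ i, T.dist r i = T.dist r v + T.dist v i → F i f ≠ f i := by
      intro y E f hE hfE hfw hguess
      have hfv : f v = y := by
        rw [hfE v (fun c hcS => hnotv c hcS), hE, Function.update_self]
      refine ⟨?_, hfv, ?_⟩
      · intro x hx
        have hxv : x ≠ v := fun hxv => hx (hxv ▸ hDself v)
        rw [hfE x (fun c hcS hD => hx (hsub c hcS x hD)), hE, Function.update_of_ne hxv]
      · intro i hDi
        by_cases hiv : i = v
        · subst hiv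
          rw [hfv]
          exact hguess
        · obtain ⟨c, hcS, hDc⟩ := hcover i hDi hiv
          exact hfw c hcS i hDc
    by_cases hg : F v f₁ = y₁
    · refine ⟨y₂, Or.inr rfl, f₂, hprop y₂ E₂ f₂ hE₂ hf₂E hf₂w ?_⟩
      rw [← hsame, hg]
      exact hne
    · exact ⟨y₁, Or.inl rfl, f₁, hprop y₁ E₁ f₁ hE₁ hf₁E hf₁w hg⟩

end Main

/-- For every tree `T`, the color-sequence `(2, 3, 3, …, 3)` is losing:
if one fixed vertex `r` has 2 available colors and every other vertex has 3, then for
every strategy family on `T` there is a coloring for which every vertex guesses wrong. -/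
theorem tree_two_three_losing {V : Type*} [Fintype V] [DecidableEq V]
    (T : SimpleGraph V) (hT : T.IsTree) (r : V)
    (a : V → ℕ) (ha : a = fun i => if i = r then 2 else 3)
    (F : ∀ i : V, (∀ j : V, Fin (a j)) → Fin (a i))
    (hF : ∀ i : V, ∀ x y : ∀ j : V, Fin (a j),
      (∀ j : V, T.Adj i j → x j = y j) → F i x = F i y) :
    ∃ f : ∀ j : V, Fin (a j), ∀ i : V, F i f ≠ f i := by
  have har : a r = 2 := by rw [ha]; simp
  have hpos : ∀ j, 0 < a j := by
    intro j; rw [ha]; dsimp only; split <;> omega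
  have h3 : ∀ v, v ≠ r → 3 ≤ a v := by
    intro v hv; rw [ha]; simp [hv]
  obtain ⟨y, _, f, _, _, hw⟩ := tth_main hT r a hpos h3 F hF
    (Finset.univ.filter (fun u => T.dist r u = T.dist r r + T.dist r u)).card r le_rfl
    (fun j => ⟨0, hpos j⟩) ⟨0, by omega⟩ ⟨1, by omega⟩
    (by simp [Fin.ext_iff])
  exact ⟨f, fun i => hw i (by simp [SimpleGraph.dist_self])⟩
end

section
/- If T is a tree with degree sequence (d_1, ..., d_n), then the sequence (2^{d_1}, ..., 2^{d_n}) is winning for T: if each vertex i has a color set of size 2^{deg(i)}, the players have a strategy family guaranteeing at least one correct guess on every coloring. -/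
/-- If `T` is a tree with degree sequence `(d_1, …, d_n)`, then the
sequence `(2^{d_1}, …, 2^{d_n})` is winning for `T`: if each vertex `i` has a color set
of size `2^{deg(i)}`, the players have a strategy family guaranteeing at least one
correct guess on every coloring. -/
theorem tree_power_degree_winning {V : Type*} [Fintype V]
    (T : SimpleGraph V) [DecidableRel T.Adj] (hT : T.IsTree)
    (a : V → ℕ) (ha : a = fun i => 2 ^ T.degree i) :
    ∃ F : ∀ i : V, (∀ j : V, Fin (a j)) → Fin (a i),
      (∀ i : V, ∀ x y : ∀ j : V, Fin (a j),
        (∀ j : V, T.Adj i j → x j = y j) → F i x = F i y) ∧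
      (∀ f : ∀ j : V, Fin (a j), ∃ i : V, F i f = f i) := by
  classical
  subst ha
  -- identify colors with functions from neighbor sets to Bool
  have hcard : ∀ i : V, Fintype.card (Fin (2 ^ T.degree i)) =
      Fintype.card (T.neighborSet i → Bool) := by
    intro i
    rw [Fintype.card_fun, Fintype.card_bool, Fintype.card_fin,
      SimpleGraph.card_neighborSet_eq_degree]
  let e : ∀ i : V, Fin (2 ^ T.degree i) ≃ (T.neighborSet i → Bool) :=
    fun i => Fintype.equivOfCardEq (hcard i)
  let eV := Fintype.equivFin V
  -- the guess of vertex i, as a function on its neighbors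
  let G : ∀ i : V, (∀ j : V, Fin (2 ^ T.degree j)) → (T.neighborSet i → Bool) :=
    fun i x p =>
      if eV i < eV p.1 then e p.1 (x p.1) ⟨i, T.adj_symm p.2⟩
      else !(e p.1 (x p.1) ⟨i, T.adj_symm p.2⟩)
  refine ⟨fun i x => (e i).symm (G i x), ?_, ?_⟩
  · intro i x y h
    have hG : G i x = G i y := by
      funext p
      have hx : x p.1 = y p.1 := h p.1 p.2
      simp only [G, hx]
    exact congrArg (e i).symm hG
  · intro f
    by_contra hno
    push_neg at hno
    -- every vertex loses on at least one incident edge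
    have key : ∀ i : V, ∃ p : T.neighborSet i, G i f p ≠ e i (f i) p := by
      intro i
      by_contra hc
      push_neg at hc
      exact hno i (by rw [funext hc, Equiv.symm_apply_apply])
    -- at most one endpoint of each edge loses on it
    have once : ∀ (i j : V) (h : T.Adj i j),
        G i f ⟨j, h⟩ ≠ e i (f i) ⟨j, h⟩ →
        G j f ⟨i, T.adj_symm h⟩ ≠ e j (f j) ⟨i, T.adj_symm h⟩ → False := by
      intro i j h hij hji
      have hne : eV i ≠ eV j := fun hh => T.ne_of_adj h (eV.injective hh)
      rcases lt_or_gt_of_ne hne with hlt | hlt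
      · have h1 : G i f ⟨j, h⟩ = e j (f j) ⟨i, T.adj_symm h⟩ := by
          simp only [G]; rw [if_pos hlt]
        have h2 : G j f ⟨i, T.adj_symm h⟩ = !(e i (f i) ⟨j, h⟩) := by
          simp only [G]; rw [if_neg (not_lt.mpr hlt.le)]
        rw [h1] at hij; rw [h2] at hji
        cases hb : e i (f i) ⟨j, h⟩ <;> cases hb' : e j (f j) ⟨i, T.adj_symm h⟩ <;>
          simp_all
      · have h1 : G i f ⟨j, h⟩ = !(e j (f j) ⟨i, T.adj_symm h⟩) := by
          simp only [G]; rw [if_neg (not_lt.mpr hlt.le)]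
        have h2 : G j f ⟨i, T.adj_symm h⟩ = e i (f i) ⟨j, h⟩ := by
          simp only [G]; rw [if_pos hlt]
        rw [h1] at hij; rw [h2] at hji
        cases hb : e i (f i) ⟨j, h⟩ <;> cases hb' : e j (f j) ⟨i, T.adj_symm h⟩ <;>
          simp_all
    choose J hJ using key
    -- map each vertex to a losing edge; this is injective
    have hinj : Set.InjOn (fun i : V => s(i, (J i).1))
        ↑(Finset.univ : Finset V) := by
      intro i _ i' _ hii
      by_contra hne
      simp only [Sym2.eq_iff] at hii
      rcases hii with ⟨h1, _⟩ | ⟨h1, h2⟩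
      · exact hne h1
      · -- i = (J i').1 and (J i).1 = i'
        have hi : G i f ⟨i', h2 ▸ (J i).2⟩ ≠ e i (f i) ⟨i', h2 ▸ (J i).2⟩ := by
          have := hJ i
          convert this using 3 <;> exact h2.symm
        have hi' : G i' f ⟨i, h1 ▸ (J i').2⟩ ≠ e i' (f i') ⟨i, h1 ▸ (J i').2⟩ := by
          have := hJ i'
          convert this using 3
        exact once i i' (h2 ▸ (J i).2) hi (by convert hi')
    have hmem : ∀ i ∈ (Finset.univ : Finset V),
        (fun i : V => s(i, (J i).1)) i ∈ T.edgeFinset := by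
      intro i _
      simp only [SimpleGraph.mem_edgeFinset, SimpleGraph.mem_edgeSet]
      exact (J i).2
    have hle := Finset.card_le_card_of_injOn _ hmem hinj
    have hcardE := hT.card_edgeFinset
    have : Nonempty V := hT.isConnected.nonempty
    have hpos : 0 < Fintype.card V := Fintype.card_pos
    simp only [Finset.card_univ] at hle
    omega
end

section
/- For the complete graph K_n, the admissible-coloring hat guessing number satisfies μ_a(K_n) ≥ 2^n − 1: for every number of colors K and every set A of colorings of the n vertices with |A| ≤ 2^n − 1, the players have a strategy guaranteeing a correct guess whenever the adversary's coloring lies in A. -/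
theorem nat_hat_arith {a b t p : ℕ} (h1 : a + b ≤ t) (h2 : a ≤ b)
    (h3 : t ≤ 2 * p - 1) (h4 : 1 ≤ p) : a ≤ p - 1 := by omega

theorem aux_hat (m : ℕ) : ∀ (ι : Type) [Fintype ι] [DecidableEq ι] (K : ℕ),
    Fintype.card ι = m → ∀ (A : Finset (ι → Fin K)), A.card ≤ 2 ^ m - 1 →
    ∃ F : ι → (ι → Fin K) → Fin K,
      (∀ i : ι, ∀ x y : ι → Fin K, (∀ j : ι, j ≠ i → x j = y j) → F i x = F i y) ∧
      (∀ x ∈ A, ∃ i : ι, F i x = x i) := by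
  induction m with
  | zero =>
    intro ι _ _ K hcard A hA
    have hie : IsEmpty ι := Fintype.card_eq_zero_iff.mp hcard
    have hAe : A = ∅ := Finset.card_eq_zero.mp (Nat.le_antisymm (by simpa using hA) (Nat.zero_le _))
    exact ⟨fun i => isEmptyElim i, fun i => isEmptyElim i, by simp [hAe]⟩
  | succ m ih =>
    intro ι _ _ K hcard A hA
    classical
    have hne : Nonempty ι := Fintype.card_pos_iff.mp (by omega)
    obtain ⟨i₀⟩ := hne
    rcases Nat.eq_zero_or_pos K with hK | hK
    · subst hK
      exact ⟨fun i x => (x i).elim0, fun i x y _ => (x i).elim0,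
        fun x _ => ⟨i₀, (x i₀).elim0⟩⟩
    have hKne : (Finset.univ : Finset (Fin K)).Nonempty := by
      have : Nonempty (Fin K) := ⟨⟨0, hK⟩⟩
      exact Finset.univ_nonempty
    have hmax := Finset.exists_max_image Finset.univ
      (fun c : Fin K => (A.filter (fun x => x i₀ = c)).card) hKne
    obtain ⟨cs, -, hcs⟩ := hmax
    have hslice : ∀ c : Fin K, c ≠ cs → (A.filter (fun x => x i₀ = c)).card ≤ 2 ^ m - 1 := by
      intro c hc
      have hd : Disjoint (A.filter (fun x => x i₀ = c)) (A.filter (fun x => x i₀ = cs)) := by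
        rw [Finset.disjoint_left]
        intro x hx hx'
        rw [Finset.mem_filter] at hx hx'
        exact hc (hx.2 ▸ hx'.2)
      have hsub : (A.filter (fun x => x i₀ = c)) ∪ (A.filter (fun x => x i₀ = cs)) ⊆ A :=
        Finset.union_subset (Finset.filter_subset _ _) (Finset.filter_subset _ _)
      have h1 : (A.filter (fun x => x i₀ = c)).card + (A.filter (fun x => x i₀ = cs)).card ≤ A.card := by
        rw [← Finset.card_union_of_disjoint hd]
        exact Finset.card_le_card hsub
      have h2 : (A.filter (fun x => x i₀ = c)).card ≤ (A.filter (fun x => x i₀ = cs)).card := by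
        simpa using hcs c (Finset.mem_univ c)
      exact nat_hat_arith h1 h2 (by rw [← pow_succ']; exact hA) Nat.one_le_two_pow
    have hcard' : Fintype.card {j : ι // j ≠ i₀} = m := by
      have h := Fintype.card_subtype_compl (fun j : ι => j = i₀)
      rw [Fintype.card_subtype_eq, hcard] at h
      simpa using h
    have key : ∀ c : Fin K, ∃ G : {j : ι // j ≠ i₀} → ({j : ι // j ≠ i₀} → Fin K) → Fin K,
        (∀ i x y, (∀ j, j ≠ i → x j = y j) → G i x = G i y) ∧
        (∀ x ∈ A, x i₀ = c → c ≠ cs → ∃ i', G i' (fun j => x j.1) = x i'.1) := by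
      intro c
      by_cases hc : c = cs
      · exact ⟨fun _ _ => cs, fun _ _ _ _ => rfl, fun x _ _ h => absurd hc h⟩
      · obtain ⟨G, hG1, hG2⟩ := ih {j : ι // j ≠ i₀} K hcard'
          ((A.filter (fun x => x i₀ = c)).image (fun x (j : {j : ι // j ≠ i₀}) => x j.1))
          (le_trans Finset.card_image_le (hslice c hc))
        refine ⟨G, hG1, ?_⟩
        intro x hx hxc _
        exact hG2 _ (Finset.mem_image_of_mem _ (Finset.mem_filter.mpr ⟨hx, hxc⟩))
    choose Gf hG1 hG2 using key
    refine ⟨fun i => if h : i = i₀ then fun _ => cs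
        else fun x => Gf (x i₀) ⟨i, h⟩ (fun j => x j.1), ?_, ?_⟩
    · intro i x y hxy
      by_cases h : i = i₀
      · simp [h]
      · simp only [dif_neg h]
        have h0 : x i₀ = y i₀ := hxy i₀ (fun he => h he.symm)
        rw [h0]
        exact hG1 (y i₀) ⟨i, h⟩ _ _ (fun j hj => hxy j.1 (fun he => hj (Subtype.ext he)))
    · intro x hx
      by_cases hc : x i₀ = cs
      · exact ⟨i₀, by simp [hc]⟩
      · obtain ⟨i', hi'⟩ := hG2 (x i₀) x hx rfl hc
        refine ⟨i'.1, ?_⟩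
        simp only [dif_neg i'.2]
        exact hi'

/-- `μ_a(K_n) ≥ 2^n − 1`: for every number of colors `K` and every set `A`
of colorings of the `n` vertices of the complete graph with `|A| ≤ 2^n − 1`, the players
(each seeing all others' hats) have a strategy guaranteeing a correct guess whenever the
adversary's coloring lies in `A`. -/
theorem admissible_hat_guessing_complete (n K : ℕ)
    (A : Finset (Fin n → Fin K)) (hA : A.card ≤ 2 ^ n - 1) :
    ∃ F : Fin n → (Fin n → Fin K) → Fin K,
      (∀ i : Fin n, ∀ x y : Fin n → Fin K, (∀ j : Fin n, j ≠ i → x j = y j) → F i x = F i y) ∧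
      (∀ x ∈ A, ∃ i : Fin n, F i x = x i) := by
  exact aux_hat n (Fin n) K (Fintype.card_fin n) A hA
end
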